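/- arXiv:2310.12140 — 6 statements merged into one kernel-verified Lean document; each statement's English description precedes it below -/
import Mathlib

section
/- Let (h_i) be a bounded sequence of positive reals such that lim_{i→∞} i^a · h_i = M for some a ∈ (0,1) and M > 0. Then for any ξ ≥ 0, lim_{n→∞} n^{a-ξ-1} · Σ_{i=1}^n i^ξ h_i = M/(1+ξ-a). -/
open Filter Finset

private lemma aux_int_bound (p : ℝ) (hp : -1 < p) (x : ℝ) (hx : 1 ≤ x) :
    |((x+1) ^ (p+1) - x ^ (p+1)) / (p+1) - x ^ p| ≤ |(x+1) ^ p - x ^ p| := by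
  have hx0 : (0:ℝ) < x := lt_of_lt_of_le one_pos hx
  have hab : x ≤ x + 1 := by linarith
  have hI : ∫ t in x..(x+1), t ^ p = ((x+1) ^ (p+1) - x ^ (p+1)) / (p+1) :=
    integral_rpow (Or.inl hp)
  have hint : IntervalIntegrable (fun t : ℝ => t ^ p) MeasureTheory.volume x (x+1) :=
    intervalIntegral.intervalIntegrable_rpow' hp
  have hconst : ∀ c : ℝ, (∫ _ in x..(x+1), c) = c := by
    intro c; simp
  rcases le_or_gt 0 p with hp0 | hp0
  · have hlow : x ^ p ≤ ∫ t in x..(x+1), t ^ p := by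
      rw [← hconst (x ^ p)]
      exact intervalIntegral.integral_mono_on hab intervalIntegrable_const hint
        (fun t ht => Real.rpow_le_rpow hx0.le ht.1 hp0)
    have hhigh : (∫ t in x..(x+1), t ^ p) ≤ (x+1) ^ p := by
      rw [← hconst ((x+1) ^ p)]
      exact intervalIntegral.integral_mono_on hab hint intervalIntegrable_const
        (fun t ht => Real.rpow_le_rpow (le_trans hx0.le ht.1) ht.2 hp0)
    have hmono : x ^ p ≤ (x+1) ^ p := Real.rpow_le_rpow hx0.le hab hp0
    rw [← hI, abs_of_nonneg (by linarith), abs_of_nonneg (by linarith)]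
    linarith
  · have hlow : (x+1) ^ p ≤ ∫ t in x..(x+1), t ^ p := by
      rw [← hconst ((x+1) ^ p)]
      exact intervalIntegral.integral_mono_on hab intervalIntegrable_const hint
        (fun t ht => Real.rpow_le_rpow_of_nonpos (lt_of_lt_of_le hx0 ht.1) ht.2 hp0.le)
    have hhigh : (∫ t in x..(x+1), t ^ p) ≤ x ^ p := by
      rw [← hconst (x ^ p)]
      exact intervalIntegral.integral_mono_on hab hint intervalIntegrable_const
        (fun t ht => Real.rpow_le_rpow_of_nonpos hx0 ht.1 hp0.le)
    have hmono : (x+1) ^ p ≤ x ^ p := Real.rpow_le_rpow_of_nonpos hx0 hab hp0.le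
    rw [← hI, abs_of_nonpos (by linarith), abs_of_nonpos (by linarith)]
    linarith

private lemma aux_tel (F : ℕ → ℝ) (n : ℕ) :
    ∑ i ∈ Finset.Icc 1 n, (F (i+1) - F i) = F (n+1) - F 1 := by
  rw [← Finset.Ico_add_one_right_eq_Icc, Finset.sum_Ico_eq_sum_range]
  have h := Finset.sum_range_sub (fun k => F (k+1)) n
  simp only [Nat.add_sub_cancel] at h ⊢
  rw [← h]
  exact Finset.sum_congr rfl (fun k _ => by rw [Nat.add_comm 1 k])

private lemma aux_sum_rpow (p : ℝ) (hp : -1 < p) :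
    Tendsto (fun n : ℕ => (∑ i ∈ Finset.Icc 1 n, (i:ℝ) ^ p) / (n:ℝ) ^ (p+1))
      atTop (nhds (1 / (p+1))) := by
  set q := p + 1 with hqdef
  have hq : 0 < q := by simp [hqdef]; linarith
  -- the error bound
  have key : ∀ n : ℕ, |(∑ i ∈ Finset.Icc 1 n, (i:ℝ) ^ p) - (((n:ℝ)+1) ^ q - 1) / q|
      ≤ ((n:ℝ)+1) ^ p + 1 := by
    intro n
    have e1 : (∑ i ∈ Finset.Icc 1 n, (i:ℝ) ^ p) - (((n:ℝ)+1) ^ q - 1) / q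
        = ∑ i ∈ Finset.Icc 1 n, ((i:ℝ) ^ p - ((((i:ℝ)+1) ^ q - (i:ℝ) ^ q) / q)) := by
      rw [Finset.sum_sub_distrib]
      congr 1
      have h2 : ∀ i ∈ Finset.Icc 1 n, (((i:ℝ)+1) ^ q - (i:ℝ) ^ q) / q
          = (fun j : ℕ => (j:ℝ) ^ q / q) (i+1) - (fun j : ℕ => (j:ℝ) ^ q / q) i := by
        intro i _
        push_cast
        ring
      rw [Finset.sum_congr rfl h2, aux_tel (fun j : ℕ => (j:ℝ) ^ q / q)]
      push_cast
      rw [Real.one_rpow]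
      ring
    have e2 : ∀ i ∈ Finset.Icc 1 n,
        |(i:ℝ) ^ p - ((((i:ℝ)+1) ^ q - (i:ℝ) ^ q) / q)| ≤ |((i:ℝ)+1) ^ p - (i:ℝ) ^ p| := by
      intro i hi
      have hi1 : (1:ℝ) ≤ (i:ℝ) := by
        have := (Finset.mem_Icc.mp hi).1
        exact_mod_cast this
      have := aux_int_bound p hp (i:ℝ) hi1
      rw [abs_sub_comm]
      exact this
    have e3 : ∑ i ∈ Finset.Icc 1 n, |((i:ℝ)+1) ^ p - (i:ℝ) ^ p| ≤ ((n:ℝ)+1) ^ p + 1 := by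
      rcases le_or_gt 0 p with hp0 | hp0
      · have h4 : ∀ i ∈ Finset.Icc 1 n, |((i:ℝ)+1) ^ p - (i:ℝ) ^ p|
            = (fun j : ℕ => (j:ℝ) ^ p) (i+1) - (fun j : ℕ => (j:ℝ) ^ p) i := by
          intro i _
          have h5 : (i:ℝ) ^ p ≤ ((i:ℝ)+1) ^ p :=
            Real.rpow_le_rpow (Nat.cast_nonneg i) (by linarith) hp0
          rw [abs_of_nonneg (by linarith)]
          push_cast
          ring
        rw [Finset.sum_congr rfl h4, aux_tel (fun j : ℕ => (j:ℝ) ^ p)]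
        push_cast
        rw [Real.one_rpow]
        linarith
      · have h4 : ∀ i ∈ Finset.Icc 1 n, |((i:ℝ)+1) ^ p - (i:ℝ) ^ p|
            = -((fun j : ℕ => (j:ℝ) ^ p) (i+1) - (fun j : ℕ => (j:ℝ) ^ p) i) := by
          intro i hi
          have hi1 : (1:ℝ) ≤ (i:ℝ) := by
            have := (Finset.mem_Icc.mp hi).1
            exact_mod_cast this
          have h5 : ((i:ℝ)+1) ^ p ≤ (i:ℝ) ^ p :=
            Real.rpow_le_rpow_of_nonpos (by linarith) (by linarith) hp0.le
          rw [abs_of_nonpos (by linarith)]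
          push_cast
          ring
        rw [Finset.sum_congr rfl h4, Finset.sum_neg_distrib, aux_tel (fun j : ℕ => (j:ℝ) ^ p)]
        push_cast
        rw [Real.one_rpow]
        have h6 : (0:ℝ) ≤ ((n:ℝ)+1) ^ p := Real.rpow_nonneg (by positivity) p
        linarith
    calc |(∑ i ∈ Finset.Icc 1 n, (i:ℝ) ^ p) - (((n:ℝ)+1) ^ q - 1) / q|
        = |∑ i ∈ Finset.Icc 1 n, ((i:ℝ) ^ p - ((((i:ℝ)+1) ^ q - (i:ℝ) ^ q) / q))| := by
          rw [e1]
      _ ≤ ∑ i ∈ Finset.Icc 1 n, |(i:ℝ) ^ p - ((((i:ℝ)+1) ^ q - (i:ℝ) ^ q) / q)| :=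
          Finset.abs_sum_le_sum_abs _ _
      _ ≤ ∑ i ∈ Finset.Icc 1 n, |((i:ℝ)+1) ^ p - (i:ℝ) ^ p| := Finset.sum_le_sum e2
      _ ≤ ((n:ℝ)+1) ^ p + 1 := e3
  -- limits
  have hnat : Tendsto (fun n : ℕ => (n:ℝ)) atTop atTop := tendsto_natCast_atTop_atTop
  have hnq : Tendsto (fun n : ℕ => (n:ℝ) ^ q) atTop atTop :=
    (tendsto_rpow_atTop hq).comp hnat
  have hinv : Tendsto (fun n : ℕ => ((n:ℝ) ^ q)⁻¹) atTop (nhds 0) := hnq.inv_tendsto_atTop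
  have hninv : Tendsto (fun n : ℕ => ((n:ℝ))⁻¹) atTop (nhds 0) := hnat.inv_tendsto_atTop
  have hratio : Tendsto (fun n : ℕ => ((n:ℝ)+1)/(n:ℝ)) atTop (nhds 1) := by
    have h1 : Tendsto (fun n : ℕ => 1 + ((n:ℝ))⁻¹) atTop (nhds (1 + 0)) :=
      tendsto_const_nhds.add hninv
    rw [add_zero] at h1
    apply h1.congr'
    filter_upwards [eventually_ge_atTop 1] with n hn
    have hn0 : (0:ℝ) < n := by exact_mod_cast hn
    field_simp
  have hrq : Tendsto (fun n : ℕ => (((n:ℝ)+1)/(n:ℝ)) ^ q) atTop (nhds 1) := by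
    have := hratio.rpow_const (p := q) (Or.inr hq.le)
    rwa [Real.one_rpow] at this
  have hrp : Tendsto (fun n : ℕ => (((n:ℝ)+1)/(n:ℝ)) ^ p) atTop (nhds 1) := by
    have := hratio.rpow_const (p := p) (Or.inl one_ne_zero)
    rwa [Real.one_rpow] at this
  -- limit 1 : main term
  have hmain : Tendsto (fun n : ℕ => ((((n:ℝ)+1) ^ q - 1) / q) / (n:ℝ) ^ q)
      atTop (nhds (1 / q)) := by
    have h1 : Tendsto (fun n : ℕ => ((((n:ℝ)+1)/(n:ℝ)) ^ q - ((n:ℝ) ^ q)⁻¹) / q)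
        atTop (nhds ((1 - 0) / q)) := (hrq.sub hinv).div_const q
    rw [sub_zero] at h1
    apply h1.congr'
    filter_upwards [eventually_ge_atTop 1] with n hn
    have hn0 : (0:ℝ) < n := by exact_mod_cast hn
    have hnq0 : (0:ℝ) < (n:ℝ) ^ q := Real.rpow_pos_of_pos hn0 q
    rw [Real.div_rpow (by linarith) hn0.le, inv_eq_one_div, div_sub_div_same, div_div,
      div_div, mul_comm]
  -- limit 2 : error term
  have herr : Tendsto
      (fun n : ℕ => ((∑ i ∈ Finset.Icc 1 n, (i:ℝ) ^ p) - (((n:ℝ)+1) ^ q - 1) / q) / (n:ℝ) ^ q)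
      atTop (nhds 0) := by
    have hb : ∀ᶠ n : ℕ in atTop,
        ‖((∑ i ∈ Finset.Icc 1 n, (i:ℝ) ^ p) - (((n:ℝ)+1) ^ q - 1) / q) / (n:ℝ) ^ q‖
          ≤ (((n:ℝ)+1) ^ p + 1) / (n:ℝ) ^ q := by
      filter_upwards [eventually_ge_atTop 1] with n hn
      have hn0 : (0:ℝ) < n := by exact_mod_cast hn
      have hnq0 : (0:ℝ) < (n:ℝ) ^ q := Real.rpow_pos_of_pos hn0 q
      rw [Real.norm_eq_abs, abs_div, abs_of_pos hnq0]
      gcongr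
      exact key n
    refine squeeze_zero_norm' hb ?_
    · have h1 : Tendsto (fun n : ℕ => (((n:ℝ)+1) ^ p) / (n:ℝ) ^ q) atTop (nhds 0) := by
        have h2 : Tendsto (fun n : ℕ => (((n:ℝ)+1)/(n:ℝ)) ^ p * ((n:ℝ))⁻¹)
            atTop (nhds (1 * 0)) := hrp.mul hninv
        rw [mul_zero] at h2
        apply h2.congr'
        filter_upwards [eventually_ge_atTop 1] with n hn
        have hn0 : (0:ℝ) < n := by exact_mod_cast hn
        rw [Real.div_rpow (by linarith) hn0.le, hqdef, Real.rpow_add hn0, Real.rpow_one]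
        ring
      have h3 : Tendsto (fun n : ℕ => (((n:ℝ)+1) ^ p) / (n:ℝ) ^ q + ((n:ℝ) ^ q)⁻¹)
          atTop (nhds (0 + 0)) := h1.add hinv
      rw [add_zero] at h3
      apply h3.congr'
      filter_upwards [eventually_ge_atTop 1] with n hn
      rw [inv_eq_one_div, ← add_div]
  have h := hmain.add herr
  rw [add_zero] at h
  apply h.congr
  intro n
  rw [← add_div]
  congr 1
  ring

/-- Lemma 5 (elementary limit lemma): if `h` is a bounded positive sequence with
`i^a * h i → M` for `a ∈ (0,1)`, `M > 0`, then for any `ξ ≥ 0`,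
`n^(a-ξ-1) * ∑_{i=1}^n i^ξ h i → M / (1 + ξ - a)`. -/
theorem stmt_0 (h : ℕ → ℝ) (a M ξ : ℝ)
    (ha : 0 < a) (ha1 : a < 1) (hM : 0 < M) (hξ : 0 ≤ ξ)
    (hpos : ∀ i, 0 < h i) (hbdd : ∃ B : ℝ, ∀ i, h i ≤ B)
    (hlim : Tendsto (fun i : ℕ => (i : ℝ) ^ a * h i) atTop (nhds M)) :
    Tendsto (fun n : ℕ =>
        (n : ℝ) ^ (a - ξ - 1) * ∑ i ∈ Finset.Icc 1 n, (i : ℝ) ^ ξ * h i)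
      atTop (nhds (M / (1 + ξ - a))) := by
  set p : ℝ := ξ - a with hpdef
  have hp : -1 < p := by rw [hpdef]; linarith
  have hq : (0:ℝ) < p + 1 := by linarith
  set T : ℕ → ℝ := fun n => ∑ i ∈ Finset.Icc 1 n, (i:ℝ) ^ p with hTdef
  have hK : Tendsto (fun n : ℕ => T n / (n:ℝ) ^ (p+1)) atTop (nhds (1/(p+1))) :=
    aux_sum_rpow p hp
  set c : ℕ → ℝ := fun i => (i:ℝ) ^ a * h i with hcdef
  set d : ℕ → ℝ := fun i => c i - M with hddef
  have hd : Tendsto d atTop (nhds 0) := by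
    have := hlim.sub_const M
    simpa [hddef, hcdef] using this
  set G : ℕ → ℝ := fun i => if i = 0 then 0 else (i:ℝ) ^ p with hGdef
  set F : ℕ → ℝ := fun i => if i = 0 then 0 else d i * (i:ℝ) ^ p with hFdef
  have hGsum : ∀ n : ℕ, ∑ i ∈ Finset.range (n+1), G i = T n := by
    intro n
    rw [Finset.sum_range_succ', hTdef]
    simp only [hGdef, if_neg (Nat.succ_ne_zero _), if_pos rfl, add_zero]
    rw [← Finset.Ico_add_one_right_eq_Icc, Finset.sum_Ico_eq_sum_range]
    simp only [Nat.add_sub_cancel]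
    exact Finset.sum_congr rfl (fun k _ => by rw [Nat.add_comm 1 k])
  have hFsum : ∀ n : ℕ, ∑ i ∈ Finset.range (n+1), F i
      = ∑ i ∈ Finset.Icc 1 n, d i * (i:ℝ) ^ p := by
    intro n
    rw [Finset.sum_range_succ']
    simp only [hFdef, if_neg (Nat.succ_ne_zero _), if_pos rfl, add_zero]
    rw [← Finset.Ico_add_one_right_eq_Icc, Finset.sum_Ico_eq_sum_range]
    simp only [Nat.add_sub_cancel]
    exact Finset.sum_congr rfl (fun k _ => by rw [Nat.add_comm 1 k])
  have hnat : Tendsto (fun n : ℕ => (n:ℝ)) atTop atTop := tendsto_natCast_atTop_atTop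
  have hnq : Tendsto (fun n : ℕ => (n:ℝ) ^ (p+1)) atTop atTop :=
    (tendsto_rpow_atTop hq).comp hnat
  have hT : Tendsto T atTop atTop := by
    have h1 : Tendsto (fun n : ℕ => T n / (n:ℝ) ^ (p+1) * (n:ℝ) ^ (p+1)) atTop atTop :=
      hK.pos_mul_atTop (by positivity) hnq
    apply h1.congr'
    filter_upwards [eventually_ge_atTop 1] with n hn
    have hn0 : (0:ℝ) < n := by exact_mod_cast hn
    rw [div_mul_cancel₀ _ (Real.rpow_pos_of_pos hn0 _).ne']
  have hGtop : Tendsto (fun n : ℕ => ∑ i ∈ Finset.range n, G i) atTop atTop := by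
    rw [← Filter.tendsto_add_atTop_iff_nat 1]
    exact hT.congr (fun n => (hGsum n).symm)
  have hG0 : (0 : ℕ → ℝ) ≤ G := by
    intro i
    by_cases hi : i = 0 <;> simp [hGdef, hi, Real.rpow_nonneg]
  have hFG : F =o[atTop] G := by
    have hd1 : d =o[atTop] (fun _ : ℕ => (1:ℝ)) := (Asymptotics.isLittleO_one_iff ℝ).2 hd
    have h2 := hd1.mul_isBigO (Asymptotics.isBigO_refl G atTop)
    refine h2.congr' ?_ ?_
    · apply Filter.Eventually.of_forall
      intro i
      by_cases hi : i = 0 <;> simp [hFdef, hGdef, hi]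
    · apply Filter.Eventually.of_forall
      intro i
      simp
  have hsum := hFG.sum_range hG0 hGtop
  have hE : (fun n : ℕ => ∑ i ∈ Finset.Icc 1 n, d i * (i:ℝ) ^ p) =o[atTop] T := by
    have h2 := hsum.comp_tendsto (tendsto_add_atTop_nat 1)
    refine h2.congr' ?_ ?_
    · exact Filter.Eventually.of_forall (fun n => hFsum n)
    · exact Filter.Eventually.of_forall (fun n => hGsum n)
  have hTO : T =O[atTop] (fun n : ℕ => (n:ℝ) ^ (p+1)) := by
    have h1 : (fun n : ℕ => T n / (n:ℝ) ^ (p+1)) =O[atTop] (fun _ : ℕ => (1:ℝ)) :=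
      hK.isBigO_one ℝ
    have h2 := h1.mul (Asymptotics.isBigO_refl (fun n : ℕ => (n:ℝ) ^ (p+1)) atTop)
    refine h2.congr' ?_ ?_
    · filter_upwards [eventually_ge_atTop 1] with n hn
      have hn0 : (0:ℝ) < n := by exact_mod_cast hn
      exact div_mul_cancel₀ _ (Real.rpow_pos_of_pos hn0 _).ne'
    · apply Filter.Eventually.of_forall
      intro n
      exact one_mul _
  have hEdiv : Tendsto
      (fun n : ℕ => (∑ i ∈ Finset.Icc 1 n, d i * (i:ℝ) ^ p) / (n:ℝ) ^ (p+1))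
      atTop (nhds 0) :=
    (hE.trans_isBigO hTO).tendsto_div_nhds_zero
  have hfin : Tendsto
      (fun n : ℕ => M * (T n / (n:ℝ) ^ (p+1))
        + (∑ i ∈ Finset.Icc 1 n, d i * (i:ℝ) ^ p) / (n:ℝ) ^ (p+1))
      atTop (nhds (M * (1/(p+1)) + 0)) := (hK.const_mul M).add hEdiv
  rw [add_zero, mul_one_div] at hfin
  have hval : M / (p+1) = M / (1 + ξ - a) := by rw [hpdef]; ring_nf
  rw [hval] at hfin
  apply hfin.congr'
  filter_upwards [eventually_ge_atTop 1] with n hn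
  have hn0 : (0:ℝ) < n := by exact_mod_cast hn
  have hnq0 : (0:ℝ) < (n:ℝ) ^ (p+1) := Real.rpow_pos_of_pos hn0 _
  have hsum_eq : ∑ i ∈ Finset.Icc 1 n, (i:ℝ) ^ ξ * h i
      = M * T n + ∑ i ∈ Finset.Icc 1 n, d i * (i:ℝ) ^ p := by
    rw [hTdef, Finset.mul_sum, ← Finset.sum_add_distrib]
    apply Finset.sum_congr rfl
    intro i hi
    have hi1 : 1 ≤ i := (Finset.mem_Icc.mp hi).1
    have hi0 : (0:ℝ) < i := by exact_mod_cast hi1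
    have hxi : (i:ℝ) ^ ξ = (i:ℝ) ^ a * (i:ℝ) ^ p := by
      rw [← Real.rpow_add hi0]
      congr 1
      rw [hpdef]
      ring
    rw [hxi]
    simp only [hddef, hcdef]
    ring
  have hpow : (n:ℝ) ^ (a - ξ - 1) = ((n:ℝ) ^ (p+1))⁻¹ := by
    rw [← Real.rpow_neg hn0.le]
    congr 1
    rw [hpdef]
    ring
  rw [hsum_eq, hpow, inv_mul_eq_div, add_div, mul_div_assoc]
end

section
/- Let a ∈ [0,1) and A > 0. There exists a constant C(a,A) such that for all integers n ≥ i ≥ 1, Σ_{k=i}^n exp(−(A/2) Σ_{l=i}^{k-1} l^{-a}) ≤ C(a,A) · i^a. -/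
open Finset

private lemma key_ineq (c x k y e : ℝ) (hc : 0 < c) (hx : 1 ≤ x) (hk : 1 ≤ k)
    (hxk : x * 2 ≤ k * c) (hy : 0 ≤ y) (hy' : y * k ≤ x * k + x)
    (he : 0 ≤ e) (he' : e * (x + c) ≤ x) :
    c / (2 * (1 + c)) ≤ x - y * e := by
  have hxc : 0 < x + c := by linarith
  have hk0 : 0 < k := by linarith
  have P : (y * k) * (e * (x + c)) ≤ (x * k + x) * x :=
    mul_le_mul hy' he' (by positivity) (by nlinarith)
  rw [div_le_iff₀ (by positivity)]
  have h5 : c * (k * (x + c)) ≤ ((x - y * e) * (2 * (1 + c))) * (k * (x + c)) := by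
    nlinarith [mul_pos hk0 hxc, mul_nonneg hy he, sq_nonneg (x - 1), sq_nonneg x,
      mul_le_mul_of_nonneg_left hxk (le_of_lt hc),
      mul_le_mul_of_nonneg_left hxk (le_of_lt (mul_pos hc hc))]
  exact (mul_le_mul_iff_of_pos_right (show (0:ℝ) < k * (x + c) by positivity)).mp h5

private lemma rpow_key (a c : ℝ) (ha0 : 0 ≤ a) (ha1 : a < 1) (hc : 0 < c)
    (k : ℕ) (hk1 : 1 ≤ k) (hk : (k : ℝ) ^ a * 2 ≤ (k : ℝ) * c) :
    c / (2 * (1 + c)) ≤ (k : ℝ) ^ a - ((k : ℝ) + 1) ^ a * Real.exp (-(c * (k : ℝ) ^ (-a))) := by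
  have hkR : (1 : ℝ) ≤ (k : ℕ) := by exact_mod_cast hk1
  have hk0 : (0 : ℝ) < k := by linarith
  have hx1 : 1 ≤ (k : ℝ) ^ a := Real.one_le_rpow hkR ha0
  have hx0 : 0 < (k : ℝ) ^ a := by linarith
  -- bound on y = (k+1)^a
  have hbase : (1 : ℝ) ≤ ((k : ℝ) + 1) / k := by
    rw [le_div_iff₀ hk0]; linarith
  have hsplit : ((k : ℝ) + 1) ^ a = (k : ℝ) ^ a * (((k : ℝ) + 1) / k) ^ a := by
    rw [← Real.mul_rpow (le_of_lt hk0) (by positivity)]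
    congr 1
    field_simp
  have hratio : (((k : ℝ) + 1) / k) ^ a ≤ ((k : ℝ) + 1) / k := by
    calc (((k : ℝ) + 1) / k) ^ a ≤ (((k : ℝ) + 1) / k) ^ (1 : ℝ) :=
          Real.rpow_le_rpow_of_exponent_le hbase (le_of_lt ha1)
      _ = ((k : ℝ) + 1) / k := Real.rpow_one _
  have hy' : ((k : ℝ) + 1) ^ a * k ≤ (k : ℝ) ^ a * k + (k : ℝ) ^ a := by
    rw [hsplit]
    have h1 : (k : ℝ) ^ a * (((k : ℝ) + 1) / k) ^ a * k ≤ (k : ℝ) ^ a * (((k : ℝ) + 1) / k) * k := by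
      have := mul_le_mul_of_nonneg_left hratio (le_of_lt hx0)
      nlinarith
    calc (k : ℝ) ^ a * (((k : ℝ) + 1) / k) ^ a * k ≤ (k : ℝ) ^ a * (((k : ℝ) + 1) / k) * k := h1
      _ = (k : ℝ) ^ a * k + (k : ℝ) ^ a := by field_simp
  -- bound on e = exp(-(c * k^{-a}))
  have hxneg : (k : ℝ) ^ (-a) = ((k : ℝ) ^ a)⁻¹ := Real.rpow_neg (le_of_lt hk0) a
  have he' : Real.exp (-(c * (k : ℝ) ^ (-a))) * ((k : ℝ) ^ a + c) ≤ (k : ℝ) ^ a := by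
    rw [hxneg]
    have hexp : 1 + c / (k : ℝ) ^ a ≤ Real.exp (c * ((k : ℝ) ^ a)⁻¹) := by
      have := Real.add_one_le_exp (c * ((k : ℝ) ^ a)⁻¹)
      rw [div_eq_mul_inv]
      linarith
    have hpos : 0 < Real.exp (c * ((k : ℝ) ^ a)⁻¹) := Real.exp_pos _
    rw [Real.exp_neg, inv_mul_le_iff₀ hpos]
    calc (k : ℝ) ^ a + c = (k : ℝ) ^ a * (1 + c / (k : ℝ) ^ a) := by field_simp
      _ ≤ (k : ℝ) ^ a * Real.exp (c * ((k : ℝ) ^ a)⁻¹) :=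
          mul_le_mul_of_nonneg_left hexp (le_of_lt hx0)
      _ = Real.exp (c * ((k : ℝ) ^ a)⁻¹) * (k : ℝ) ^ a := mul_comm _ _
  exact key_ineq c ((k : ℝ) ^ a) (k : ℝ) (((k : ℝ) + 1) ^ a)
    (Real.exp (-(c * (k : ℝ) ^ (-a)))) hc hx1 hkR hk
    (Real.rpow_nonneg (by positivity) a) hy' (Real.exp_nonneg _) he'

/-- Step (I) of Lemma 4: for `a ∈ [0,1)`, `A > 0`, there is a constant `C(a,A)` with
`∑_{k=i}^n exp(−(A/2) ∑_{l=i}^{k−1} l^{−a}) ≤ C(a,A) i^a` uniformly in `n`. -/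
theorem stmt_11 (a A : ℝ) (ha0 : 0 ≤ a) (ha1 : a < 1) (hA : 0 < A) :
    ∃ C : ℝ, 0 < C ∧ ∀ n i : ℕ, 1 ≤ i → i ≤ n →
      ∑ k ∈ Icc i n, Real.exp (-(A / 2) * ∑ l ∈ Ico i k, (l : ℝ) ^ (-a)) ≤
        C * (i : ℝ) ^ a := by
  obtain ⟨c, hc_def⟩ : ∃ c : ℝ, c = A / 2 := ⟨_, rfl⟩
  have hc : 0 < c := by rw [hc_def]; positivity
  -- choose K0
  obtain ⟨N, hN⟩ := exists_nat_ge ((2 / c) ^ (1 / (1 - a)))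
  obtain ⟨K0, hK0_def⟩ : ∃ K0 : ℕ, K0 = max N 1 := ⟨_, rfl⟩
  have hK01 : 1 ≤ K0 := hK0_def ▸ le_max_right _ _
  have hK0R : (1 : ℝ) ≤ (K0 : ℝ) := by exact_mod_cast hK01
  have h1a : (0 : ℝ) < 1 - a := by linarith
  have hK0prop : ∀ k : ℕ, K0 ≤ k → (k : ℝ) ^ a * 2 ≤ (k : ℝ) * c := by
    intro k hk
    have hk1 : 1 ≤ k := le_trans hK01 hk
    have hkR : (1 : ℝ) ≤ (k : ℝ) := by exact_mod_cast hk1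
    have hk0 : (0 : ℝ) < k := by linarith
    have hb0 : (0 : ℝ) ≤ (2 / c) ^ (1 / (1 - a)) := Real.rpow_nonneg (by positivity) _
    have hbk : (2 / c) ^ (1 / (1 - a)) ≤ (k : ℝ) := by
      calc (2 / c) ^ (1 / (1 - a)) ≤ (N : ℝ) := hN
        _ ≤ (K0 : ℝ) := by exact_mod_cast hK0_def ▸ le_max_left N 1
        _ ≤ (k : ℝ) := by exact_mod_cast hk
    have hpow : (2 / c) ≤ (k : ℝ) ^ (1 - a) := by
      calc (2 / c) = ((2 / c) ^ (1 / (1 - a))) ^ (1 - a) := by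
            rw [← Real.rpow_mul (by positivity), one_div, inv_mul_cancel₀ (ne_of_gt h1a),
              Real.rpow_one]
        _ ≤ (k : ℝ) ^ (1 - a) := Real.rpow_le_rpow hb0 hbk (le_of_lt h1a)
    have hmul : (k : ℝ) ^ a * (k : ℝ) ^ (1 - a) = (k : ℝ) := by
      rw [← Real.rpow_add hk0]
      norm_num
    have h2 : (k : ℝ) ^ a * (2 / c) ≤ (k : ℝ) := by
      calc (k : ℝ) ^ a * (2 / c) ≤ (k : ℝ) ^ a * (k : ℝ) ^ (1 - a) :=
            mul_le_mul_of_nonneg_left hpow (Real.rpow_nonneg (le_of_lt hk0) a)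
        _ = (k : ℝ) := hmul
    have h3 : (k : ℝ) ^ a * (2 / c) * c ≤ (k : ℝ) * c :=
      mul_le_mul_of_nonneg_right h2 (le_of_lt hc)
    calc (k : ℝ) ^ a * 2 = (k : ℝ) ^ a * (2 / c) * c := by field_simp
      _ ≤ (k : ℝ) * c := h3
  obtain ⟨δ, hδ_def⟩ : ∃ δ : ℝ, δ = c / (2 * (1 + c)) := ⟨_, rfl⟩
  have hδ : 0 < δ := by rw [hδ_def]; positivity
  obtain ⟨ε, hε_def⟩ : ∃ ε : ℝ, ε = 1 - Real.exp (-(c / 2) * (K0 : ℝ) ^ (-a)) := ⟨_, rfl⟩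
  have hε : 0 < ε := by
    rw [hε_def]
    have h1 : (0 : ℝ) < (K0 : ℝ) ^ (-a) := Real.rpow_pos_of_pos (by linarith) _
    have h2 : Real.exp (-(c / 2) * (K0 : ℝ) ^ (-a)) < 1 := by
      rw [Real.exp_lt_one_iff]
      nlinarith
    linarith
  obtain ⟨D, hD_def⟩ : ∃ D : ℝ, D = ((K0 : ℝ) + 1 + δ) / ε := ⟨_, rfl⟩
  have hD : 0 < D := by rw [hD_def]; positivity
  refine ⟨(1 + D) / δ, by positivity, ?_⟩
  intro n i hi hin
  obtain ⟨S, hS⟩ : ∃ S : ℕ → ℝ, S = fun k : ℕ => ∑ l ∈ Ico i k, (l : ℝ) ^ (-a) := ⟨_, rfl⟩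
  have hSnonneg : ∀ k, 0 ≤ S k := by
    intro k
    rw [hS]
    apply Finset.sum_nonneg
    intro l _
    exact Real.rpow_nonneg (by positivity) _
  obtain ⟨E, hE⟩ : ∃ E : ℕ → ℝ, E = fun k : ℕ => Real.exp (-c * S k) := ⟨_, rfl⟩
  obtain ⟨E', hE'⟩ : ∃ E' : ℕ → ℝ, E' = fun k : ℕ => Real.exp (-(c / 2) * S k) := ⟨_, rfl⟩
  obtain ⟨f, hf⟩ : ∃ f : ℕ → ℝ, f = fun k : ℕ => (k : ℝ) ^ a * E k + D * E' k := ⟨_, rfl⟩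
  have hEpos : ∀ k, 0 < E k := fun k => by simp only [hE]; exact Real.exp_pos _
  have hE'pos : ∀ k, 0 < E' k := fun k => by simp only [hE']; exact Real.exp_pos _
  have hEE' : ∀ k, E k ≤ E' k := by
    intro k
    simp only [hE, hE']
    have h1 : 0 ≤ c / 2 * S k := mul_nonneg (by linarith) (hSnonneg k)
    apply Real.exp_le_exp.2
    linarith
  have key : ∀ k, i ≤ k → δ * E k ≤ f k - f (k + 1) := by
    intro k hik
    have hk1 : 1 ≤ k := le_trans hi hik
    have hkR : (1 : ℝ) ≤ (k : ℝ) := by exact_mod_cast hk1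
    have hk0 : (0 : ℝ) < k := by linarith
    have hS1 : S (k + 1) = S k + (k : ℝ) ^ (-a) := by
      simp only [hS]
      exact Finset.sum_Ico_succ_top hik _
    have ht0 : (0 : ℝ) < (k : ℝ) ^ (-a) := Real.rpow_pos_of_pos hk0 _
    have hE1 : E (k + 1) = E k * Real.exp (-(c * (k : ℝ) ^ (-a))) := by
      simp only [hE]
      rw [hS1, ← Real.exp_add]
      ring_nf
    have hE'1 : E' (k + 1) = E' k * Real.exp (-(c / 2 * (k : ℝ) ^ (-a))) := by
      simp only [hE']
      rw [hS1, ← Real.exp_add]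
      ring_nf
    have hcast : ((k + 1 : ℕ) : ℝ) = (k : ℝ) + 1 := by push_cast; ring
    have hfdiff : f k - f (k + 1) =
        E k * ((k : ℝ) ^ a - ((k : ℝ) + 1) ^ a * Real.exp (-(c * (k : ℝ) ^ (-a))))
          + D * (E' k * (1 - Real.exp (-(c / 2 * (k : ℝ) ^ (-a))))) := by
      simp only [hf, hE1, hE'1, hcast]
      ring
    have hexple1 : Real.exp (-(c / 2 * (k : ℝ) ^ (-a))) ≤ 1 := by
      rw [Real.exp_le_one_iff]
      have h1 : 0 < c / 2 * (k : ℝ) ^ (-a) := mul_pos (by linarith) ht0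
      linarith
    rw [hfdiff]
    by_cases hK0k : K0 ≤ k
    · have h1 : δ ≤ (k : ℝ) ^ a - ((k : ℝ) + 1) ^ a * Real.exp (-(c * (k : ℝ) ^ (-a))) :=
        hδ_def ▸ rpow_key a c ha0 ha1 hc k hk1 (hK0prop k hK0k)
      have A1 : E k * δ ≤ E k * ((k : ℝ) ^ a - ((k : ℝ) + 1) ^ a * Real.exp (-(c * (k : ℝ) ^ (-a)))) :=
        mul_le_mul_of_nonneg_left h1 (le_of_lt (hEpos k))
      have A2 : 0 ≤ D * (E' k * (1 - Real.exp (-(c / 2 * (k : ℝ) ^ (-a))))) :=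
        mul_nonneg (le_of_lt hD) (mul_nonneg (le_of_lt (hE'pos k)) (by linarith))
      linarith [A1, A2]
    · push_neg at hK0k
      have hkK0 : k ≤ K0 := le_of_lt hK0k
      have hkK0R : (k : ℝ) ≤ (K0 : ℝ) := by exact_mod_cast hkK0
      have hka : ((k : ℝ) + 1) ^ a ≤ (K0 : ℝ) + 1 := by
        calc ((k : ℝ) + 1) ^ a ≤ ((k : ℝ) + 1) ^ (1 : ℝ) :=
              Real.rpow_le_rpow_of_exponent_le (by linarith) (le_of_lt ha1)
          _ = (k : ℝ) + 1 := Real.rpow_one _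
          _ ≤ (K0 : ℝ) + 1 := by linarith
      have hexp1 : Real.exp (-(c * (k : ℝ) ^ (-a))) ≤ 1 := by
        rw [Real.exp_le_one_iff]
        have h1 : 0 < c * (k : ℝ) ^ (-a) := mul_pos hc ht0
        linarith
      have hg : -((K0 : ℝ) + 1) ≤
          (k : ℝ) ^ a - ((k : ℝ) + 1) ^ a * Real.exp (-(c * (k : ℝ) ^ (-a))) := by
        have h1 : ((k : ℝ) + 1) ^ a * Real.exp (-(c * (k : ℝ) ^ (-a))) ≤ ((K0 : ℝ) + 1) * 1 :=
          mul_le_mul hka hexp1 (Real.exp_nonneg _) (by linarith)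
        have h2 : 0 ≤ (k : ℝ) ^ a := Real.rpow_nonneg (le_of_lt hk0) a
        linarith
      have htK0 : (K0 : ℝ) ^ (-a) ≤ (k : ℝ) ^ (-a) :=
        Real.rpow_le_rpow_of_nonpos hk0 hkK0R (by linarith)
      have hexpε : Real.exp (-(c / 2 * (k : ℝ) ^ (-a))) ≤
          Real.exp (-(c / 2) * (K0 : ℝ) ^ (-a)) := by
        have h1 : c / 2 * (K0 : ℝ) ^ (-a) ≤ c / 2 * (k : ℝ) ^ (-a) :=
          mul_le_mul_of_nonneg_left htK0 (by linarith)
        apply Real.exp_le_exp.2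
        linarith
      have h2 : ε ≤ 1 - Real.exp (-(c / 2 * (k : ℝ) ^ (-a))) := by
        rw [hε_def]; linarith
      have h3 : E k * ε ≤ E' k * (1 - Real.exp (-(c / 2 * (k : ℝ) ^ (-a)))) :=
        mul_le_mul (hEE' k) h2 (le_of_lt hε) (le_of_lt (hE'pos k))
      have hεne : ε ≠ 0 := ne_of_gt hε
      have hDε : D * ε = (K0 : ℝ) + 1 + δ := by
        rw [hD_def]; field_simp
      have A1 : ((K0 : ℝ) + 1 + δ) * E k ≤
          D * (E' k * (1 - Real.exp (-(c / 2 * (k : ℝ) ^ (-a))))) := by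
        calc ((K0 : ℝ) + 1 + δ) * E k = D * (E k * ε) := by rw [← hDε]; ring
          _ ≤ D * (E' k * (1 - Real.exp (-(c / 2 * (k : ℝ) ^ (-a))))) :=
              mul_le_mul_of_nonneg_left h3 (le_of_lt hD)
      have A2 : E k * (-((K0 : ℝ) + 1)) ≤
          E k * ((k : ℝ) ^ a - ((k : ℝ) + 1) ^ a * Real.exp (-(c * (k : ℝ) ^ (-a)))) :=
        mul_le_mul_of_nonneg_left hg (le_of_lt (hEpos k))
      linarith [A1, A2]
  -- telescoping
  have tele : ∀ m, i ≤ m → ∑ k ∈ Ico i m, (f k - f (k + 1)) = f i - f m := by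
    intro m hm
    induction m, hm using Nat.le_induction with
    | base => simp
    | succ m hm ih => rw [Finset.sum_Ico_succ_top hm, ih]; ring
  have hSi : S i = 0 := by simp [hS]
  have hEi : E i = 1 := by simp [hE, hSi]
  have hE'i : E' i = 1 := by simp [hE', hSi]
  have hfi : f i = (i : ℝ) ^ a + D := by simp [hf, hEi, hE'i]
  have hfn : 0 ≤ f (n + 1) := by
    simp only [hf]
    have h0 : (0 : ℝ) ≤ ((n + 1 : ℕ) : ℝ) ^ a := Real.rpow_nonneg (by positivity) a
    have h1 := mul_nonneg h0 (le_of_lt (hEpos (n + 1)))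
    have h2 := mul_nonneg (le_of_lt hD) (le_of_lt (hE'pos (n + 1)))
    linarith
  have hgoal : ∑ k ∈ Icc i n, E k ≤ (1 / δ) * ((i : ℝ) ^ a + D) := by
    have hsum : ∑ k ∈ Icc i n, δ * E k ≤ ∑ k ∈ Icc i n, (f k - f (k + 1)) := by
      apply Finset.sum_le_sum
      intro k hk
      exact key k (Finset.mem_Icc.1 hk).1
    have htele : ∑ k ∈ Icc i n, (f k - f (k + 1)) = f i - f (n + 1) := by
      rw [← Finset.Ico_add_one_right_eq_Icc]
      exact tele (n + 1) (by omega)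
    have h1 : δ * ∑ k ∈ Icc i n, E k ≤ f i - f (n + 1) := by
      rw [Finset.mul_sum, ← htele]; exact hsum
    have h2 : δ * ∑ k ∈ Icc i n, E k ≤ (i : ℝ) ^ a + D := by
      rw [hfi] at h1; linarith
    rw [one_div, le_inv_mul_iff₀ hδ]
    exact h2
  have hia : 1 ≤ (i : ℝ) ^ a := Real.one_le_rpow (by exact_mod_cast hi) ha0
  have hfinal : (1 / δ) * ((i : ℝ) ^ a + D) ≤ (1 + D) / δ * (i : ℝ) ^ a := by
    rw [div_mul_eq_mul_div, div_mul_eq_mul_div, div_le_div_iff₀ hδ hδ]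
    have h1 : D * 1 * δ ≤ D * (i : ℝ) ^ a * δ :=
      mul_le_mul_of_nonneg_right (mul_le_mul_of_nonneg_left hia (le_of_lt hD)) (le_of_lt hδ)
    linarith
  calc ∑ k ∈ Icc i n, Real.exp (-(A / 2) * ∑ l ∈ Ico i k, (l : ℝ) ^ (-a))
      = ∑ k ∈ Icc i n, E k := by
        apply Finset.sum_congr rfl
        intro k _
        simp only [hE, hS, hc_def]
    _ ≤ (1 / δ) * ((i : ℝ) ^ a + D) := hgoal
    _ ≤ (1 + D) / δ * (i : ℝ) ^ a := hfinal
end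

section
/- Let a ∈ [0,1) and A > 0. There exists a constant C(a,A) such that for all integers n ≥ j ≥ 1, Σ_{i=j}^n i^a · exp(−A Σ_{l=j}^{i-1} l^{-a}) ≤ C(a,A) · j^{2a}. -/
open Finset

private lemma geom_sum_le_inv_one_sub {r : ℝ} (h0 : 0 ≤ r) (h1 : r < 1) (N : ℕ) :
    ∑ i ∈ range N, r ^ i ≤ (1 - r)⁻¹ := by
  have hs : Summable (fun i : ℕ => r ^ i) := summable_geometric_of_lt_one h0 h1
  calc ∑ i ∈ range N, r ^ i ≤ ∑' i : ℕ, r ^ i :=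
        Summable.sum_le_tsum (range N) (fun i _ => pow_nonneg h0 i) hs
    _ = (1 - r)⁻¹ := tsum_geometric_of_lt_one h0 h1

private lemma sum_inv_sq_le (n : ℕ) : ∑ i ∈ Icc 1 n, ((i : ℝ) ^ 2)⁻¹ ≤ 2 := by
  have key : ∀ n : ℕ, 1 ≤ n → ∑ i ∈ Icc 1 n, ((i : ℝ) ^ 2)⁻¹ ≤ 2 - (n : ℝ)⁻¹ := by
    intro n hn
    induction n, hn using Nat.le_induction with
    | base => norm_num
    | succ n hn ih =>
      rw [Finset.sum_Icc_succ_top (by omega)]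
      have hn0 : (0:ℝ) < n := by exact_mod_cast hn
      have hkey : (((n:ℝ) + 1) ^ 2)⁻¹ ≤ (n : ℝ)⁻¹ - ((n:ℝ)+1)⁻¹ := by
        rw [inv_sub_inv (ne_of_gt hn0) (by positivity), add_sub_cancel_left, one_div]
        apply inv_anti₀ (by positivity)
        nlinarith
      push_cast
      linarith [hkey, ih]
  rcases Nat.eq_zero_or_pos n with h | h
  · subst h; simp
  · linarith [key n h, inv_pos.mpr (show (0:ℝ) < n by exact_mod_cast h)]

/-- Step (II) of Lemma 4: for `a ∈ [0,1)`, `A > 0`, there is a constant `C(a,A)` with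
`∑_{i=j}^n i^a exp(−A ∑_{l=j}^{i−1} l^{−a}) ≤ C(a,A) j^{2a}` uniformly in `n`. -/
theorem stmt_12 (a A : ℝ) (ha0 : 0 ≤ a) (ha1 : a < 1) (hA : 0 < A) :
    ∃ C : ℝ, 0 < C ∧ ∀ n j : ℕ, 1 ≤ j → j ≤ n →
      ∑ i ∈ Icc j n, (i : ℝ) ^ a * Real.exp (-A * ∑ l ∈ Ico j i, (l : ℝ) ^ (-a)) ≤
        C * (j : ℝ) ^ (2 * a) := by
  set m : ℕ := ⌈(a + 2) / (1 - a)⌉₊ with hm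
  set K : ℝ := (m.factorial : ℝ) * (2 / A) ^ m with hK
  have hKpos : 0 < K := by
    apply mul_pos
    · exact_mod_cast m.factorial_pos
    · positivity
  refine ⟨(2 + 4 / A) + 2 * K, by positivity, ?_⟩
  intro n j hj hjn
  have hj0 : (0:ℝ) < (j:ℝ) := by exact_mod_cast hj
  have hja : (0:ℝ) < (j:ℝ) ^ a := Real.rpow_pos_of_pos hj0 a
  have hja1 : (1:ℝ) ≤ (j:ℝ) ^ a :=
    Real.one_le_rpow (by exact_mod_cast hj) ha0
  set x : ℝ := A / (2 * (j:ℝ) ^ a) with hx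
  have hxpos : 0 < x := by positivity
  set r : ℝ := Real.exp (-x) with hr
  have hr0 : 0 < r := Real.exp_pos _
  have hr1 : r < 1 := Real.exp_lt_one_iff.mpr (by linarith)
  -- exponent for tail
  have hm2 : a + 2 ≤ (1 - a) * m := by
    have h1a : (0:ℝ) < 1 - a := by linarith
    have := Nat.le_ceil ((a + 2) / (1 - a))
    rw [div_le_iff₀ h1a] at this
    linarith [this]
  -- pointwise bound
  have key : ∀ i ∈ Icc j n,
      (i : ℝ) ^ a * Real.exp (-A * ∑ l ∈ Ico j i, (l : ℝ) ^ (-a)) ≤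
      2 * (j:ℝ) ^ a * r ^ (i - j) + K * ((i : ℝ) ^ 2)⁻¹ := by
    intro i hi
    simp only [mem_Icc] at hi
    obtain ⟨hji, hin⟩ := hi
    have hi1 : 1 ≤ i := le_trans hj hji
    have hi0 : (0:ℝ) < (i:ℝ) := by exact_mod_cast hi1
    have hterm2_nonneg : 0 ≤ K * ((i : ℝ) ^ 2)⁻¹ := by positivity
    have hterm1_nonneg : 0 ≤ 2 * (j:ℝ) ^ a * r ^ (i - j) := by positivity
    by_cases hcase : i ≤ 2 * j
    · -- near case
      have h2j : (i:ℝ) ≤ 2 * j := by exact_mod_cast hcase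
      -- i^a ≤ 2 j^a
      have hia : (i:ℝ) ^ a ≤ 2 * (j:ℝ) ^ a := by
        calc (i:ℝ) ^ a ≤ (2 * j : ℝ) ^ a :=
              Real.rpow_le_rpow (le_of_lt hi0) h2j ha0
          _ = 2 ^ a * (j:ℝ) ^ a := Real.mul_rpow (by norm_num) (le_of_lt hj0)
          _ ≤ 2 * (j:ℝ) ^ a := by
              have : (2:ℝ) ^ a ≤ 2 ^ (1:ℝ) :=
                Real.rpow_le_rpow_of_exponent_le one_le_two (le_of_lt ha1)
              rw [Real.rpow_one] at this
              nlinarith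
      have hsum_lb : ((i - j : ℕ) : ℝ) * (2 * (j:ℝ) ^ a)⁻¹ ≤
          ∑ l ∈ Ico j i, (l : ℝ) ^ (-a) := by
        have := Finset.card_nsmul_le_sum (Ico j i) (fun l => (l:ℝ) ^ (-a))
            ((2 * (j:ℝ) ^ a)⁻¹) ?_
        · simpa [Nat.card_Ico, nsmul_eq_mul] using this
        · intro l hl
          simp only [mem_Ico] at hl
          have hl0 : (0:ℝ) < (l:ℝ) := by
            exact_mod_cast lt_of_lt_of_le (by omega : 0 < j) hl.1
          have hl2j : (l:ℝ) ≤ 2 * j := by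
            have : l ≤ 2 * j := by omega
            exact_mod_cast this
          have hla : (l:ℝ) ^ a ≤ 2 * (j:ℝ) ^ a := by
            calc (l:ℝ) ^ a ≤ (2 * j : ℝ) ^ a :=
                  Real.rpow_le_rpow (le_of_lt hl0) hl2j ha0
              _ = 2 ^ a * (j:ℝ) ^ a := Real.mul_rpow (by norm_num) (le_of_lt hj0)
              _ ≤ 2 * (j:ℝ) ^ a := by
                  have : (2:ℝ) ^ a ≤ 2 ^ (1:ℝ) :=
                    Real.rpow_le_rpow_of_exponent_le one_le_two (le_of_lt ha1)
                  rw [Real.rpow_one] at this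
                  nlinarith
          rw [Real.rpow_neg (le_of_lt hl0)]
          exact inv_anti₀ (Real.rpow_pos_of_pos hl0 a) hla
      have hexp : Real.exp (-A * ∑ l ∈ Ico j i, (l : ℝ) ^ (-a)) ≤ r ^ (i - j) := by
        rw [hr, ← Real.exp_nat_mul]
        apply Real.exp_le_exp.mpr
        have : -A * ∑ l ∈ Ico j i, (l : ℝ) ^ (-a) ≤
            -A * (((i - j : ℕ) : ℝ) * (2 * (j:ℝ) ^ a)⁻¹) := by
          apply mul_le_mul_of_nonpos_left hsum_lb (by linarith)
        refine this.trans (le_of_eq ?_)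
        rw [hx]
        field_simp
      calc (i : ℝ) ^ a * Real.exp (-A * ∑ l ∈ Ico j i, (l : ℝ) ^ (-a))
          ≤ 2 * (j:ℝ) ^ a * r ^ (i - j) := by
            apply mul_le_mul hia hexp (le_of_lt (Real.exp_pos _)) (by positivity)
        _ ≤ _ := le_add_of_nonneg_right hterm2_nonneg
    · -- far case : 2*j < i
      push_neg at hcase
      have h2j : 2 * (j:ℝ) < (i:ℝ) := by exact_mod_cast hcase
      -- inner sum ≥ (i/2) * i^{-a}
      have hsum_lb : ((i:ℝ) / 2) * (i:ℝ) ^ (-a) ≤ ∑ l ∈ Ico j i, (l : ℝ) ^ (-a) := by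
        have hcard : ((i:ℝ) / 2) ≤ ((i - j : ℕ) : ℝ) := by
          have : ((i - j : ℕ) : ℝ) = (i:ℝ) - j := by
            have : j ≤ i := hji
            push_cast [Nat.cast_sub this]
            ring
          rw [this]; linarith
        have hterm : ∀ l ∈ Ico j i, (i:ℝ) ^ (-a) ≤ (l:ℝ) ^ (-a) := by
          intro l hl
          simp only [mem_Ico] at hl
          have hl0 : (0:ℝ) < (l:ℝ) := by
            exact_mod_cast lt_of_lt_of_le (by omega : 0 < j) hl.1
          have hli : (l:ℝ) ≤ (i:ℝ) := by exact_mod_cast le_of_lt hl.2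
          rw [Real.rpow_neg (le_of_lt hl0), Real.rpow_neg (le_of_lt hi0)]
          apply inv_anti₀ (Real.rpow_pos_of_pos hl0 a)
          exact Real.rpow_le_rpow (le_of_lt hl0) hli ha0
        have := Finset.card_nsmul_le_sum (Ico j i) (fun l => (l:ℝ) ^ (-a))
            ((i:ℝ) ^ (-a)) hterm
        simp only [Nat.card_Ico, nsmul_eq_mul] at this
        calc ((i:ℝ) / 2) * (i:ℝ) ^ (-a) ≤ ((i - j : ℕ) : ℝ) * (i:ℝ) ^ (-a) := by
              apply mul_le_mul_of_nonneg_right hcard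
                (le_of_lt (Real.rpow_pos_of_pos hi0 _))
          _ ≤ _ := this
      -- so exp term ≤ exp(-(A/2) i^(1-a))
      have hexp : Real.exp (-A * ∑ l ∈ Ico j i, (l : ℝ) ^ (-a)) ≤
          Real.exp (-(A / 2 * (i:ℝ) ^ (1 - a))) := by
        apply Real.exp_le_exp.mpr
        have h1 : -A * ∑ l ∈ Ico j i, (l : ℝ) ^ (-a) ≤
            -A * (((i:ℝ) / 2) * (i:ℝ) ^ (-a)) :=
          mul_le_mul_of_nonpos_left hsum_lb (by linarith)
        refine h1.trans (le_of_eq ?_)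
        have : (i:ℝ) ^ (1 - a) = (i:ℝ) * (i:ℝ) ^ (-a) := by
          rw [show (1 - a) = 1 + (-a) by ring, Real.rpow_add hi0, Real.rpow_one]
        rw [this]; ring
      -- exp(-y) ≤ m! / y^m
      set y : ℝ := A / 2 * (i:ℝ) ^ (1 - a) with hy
      have hypos : 0 < y := by
        apply mul_pos (by linarith) (Real.rpow_pos_of_pos hi0 _)
      have hpow_exp : y ^ m / (m.factorial : ℝ) ≤ Real.exp y := by
        have := Real.sum_le_exp_of_nonneg (le_of_lt hypos) (m + 1)
        refine le_trans ?_ this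
        exact Finset.single_le_sum (f := fun k => y ^ k / (k.factorial : ℝ))
          (fun k _ => by positivity) (self_mem_range_succ m)
      have hexp2 : Real.exp (-y) ≤ (m.factorial : ℝ) / y ^ m := by
        rw [Real.exp_neg]
        have h1 : 0 < y ^ m / (m.factorial : ℝ) := by positivity
        calc (Real.exp y)⁻¹ ≤ (y ^ m / (m.factorial : ℝ))⁻¹ :=
              inv_anti₀ h1 hpow_exp
          _ = (m.factorial : ℝ) / y ^ m := by
              rw [inv_div]
      -- i^a * m!/y^m ≤ K * (i^2)⁻¹
      have hiK : (i:ℝ) ^ a * ((m.factorial : ℝ) / y ^ m) ≤ K * ((i : ℝ) ^ 2)⁻¹ := by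
        have hy_m : y ^ m = (A / 2) ^ m * (i:ℝ) ^ ((1 - a) * m) := by
          rw [hy, mul_pow]
          congr 1
          rw [← Real.rpow_natCast ((i:ℝ) ^ (1 - a)) m, ← Real.rpow_mul (le_of_lt hi0)]
        have hipow : (i:ℝ) ^ a * ((i:ℝ) ^ ((1 - a) * m))⁻¹ ≤ ((i : ℝ) ^ 2)⁻¹ := by
          rw [← Real.rpow_neg (le_of_lt hi0), ← Real.rpow_add hi0]
          have h2 : ((i : ℝ) ^ 2)⁻¹ = (i:ℝ) ^ (-2 : ℝ) := by
            rw [show (-2:ℝ) = -((2:ℕ):ℝ) by norm_num, Real.rpow_neg (le_of_lt hi0),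
              Real.rpow_natCast]
          rw [h2]
          apply Real.rpow_le_rpow_of_exponent_le (by exact_mod_cast hi1)
          linarith
        calc (i:ℝ) ^ a * ((m.factorial : ℝ) / y ^ m)
            = (m.factorial : ℝ) * (2 / A) ^ m * ((i:ℝ) ^ a * ((i:ℝ) ^ ((1 - a) * m))⁻¹) := by
              rw [hy_m]
              have hP : ((i:ℝ) ^ ((1 - a) * m)) ≠ 0 :=
                ne_of_gt (Real.rpow_pos_of_pos hi0 _)
              field_simp
              rw [← mul_pow, show A / 2 * (2 / A) = 1 by field_simp, one_pow]
          _ ≤ (m.factorial : ℝ) * (2 / A) ^ m * ((i : ℝ) ^ 2)⁻¹ := by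
              apply mul_le_mul_of_nonneg_left hipow (by positivity)
          _ = K * ((i : ℝ) ^ 2)⁻¹ := by rw [hK]
      calc (i : ℝ) ^ a * Real.exp (-A * ∑ l ∈ Ico j i, (l : ℝ) ^ (-a))
          ≤ (i : ℝ) ^ a * ((m.factorial : ℝ) / y ^ m) := by
            apply mul_le_mul_of_nonneg_left _ (Real.rpow_nonneg (le_of_lt hi0) a)
            exact le_trans hexp hexp2
        _ ≤ K * ((i : ℝ) ^ 2)⁻¹ := hiK
        _ ≤ _ := le_add_of_nonneg_left hterm1_nonneg
  -- now sum the two pieces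
  have hsplit : ∑ i ∈ Icc j n, (i : ℝ) ^ a * Real.exp (-A * ∑ l ∈ Ico j i, (l : ℝ) ^ (-a)) ≤
      (∑ i ∈ Icc j n, 2 * (j:ℝ) ^ a * r ^ (i - j)) +
      ∑ i ∈ Icc j n, K * ((i : ℝ) ^ 2)⁻¹ := by
    rw [← Finset.sum_add_distrib]
    exact Finset.sum_le_sum key
  -- geometric part
  have hgeom : ∑ i ∈ Icc j n, 2 * (j:ℝ) ^ a * r ^ (i - j) ≤
      (2 + 4 / A) * (j:ℝ) ^ (2 * a) := by
    have h1 : ∑ i ∈ Icc j n, 2 * (j:ℝ) ^ a * r ^ (i - j) =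
        2 * (j:ℝ) ^ a * ∑ k ∈ range (n + 1 - j), r ^ k := by
      rw [← Finset.mul_sum]
      congr 1
      rw [show Icc j n = Ico j (n + 1) by rw [Finset.Ico_add_one_right_eq_Icc]]
      rw [Finset.sum_Ico_eq_sum_range]
      apply Finset.sum_congr rfl
      intro k _
      congr 1
      omega
    rw [h1]
    have hgs : ∑ k ∈ range (n + 1 - j), r ^ k ≤ (1 - r)⁻¹ :=
      geom_sum_le_inv_one_sub (le_of_lt hr0) hr1 _
    have hinv : (1 - r)⁻¹ ≤ 1 + x⁻¹ := by
      have hex : x + 1 ≤ Real.exp x := Real.add_one_le_exp x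
      have hrx : r ≤ (1 + x)⁻¹ := by
        rw [hr, Real.exp_neg]
        apply inv_anti₀ (by linarith)
        linarith
      have h1x : (0:ℝ) < 1 + x := by linarith
      have h1r : 0 < 1 - r := by linarith
      have hlb : x / (1 + x) ≤ 1 - r := by
        have : 1 - (1 + x)⁻¹ = x / (1 + x) := by
          field_simp
          ring
        linarith [this]
      calc (1 - r)⁻¹ ≤ (x / (1 + x))⁻¹ :=
            inv_anti₀ (by positivity) hlb
        _ = (1 + x) / x := by rw [inv_div]
        _ = 1 + x⁻¹ := by rw [add_div, div_self (ne_of_gt hxpos), one_div, add_comm]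
    have hxinv : x⁻¹ = 2 * (j:ℝ) ^ a / A := by
      rw [hx]
      field_simp
    have hjaa : (j:ℝ) ^ a * (j:ℝ) ^ a = (j:ℝ) ^ (2 * a) := by
      rw [← Real.rpow_add hj0]
      ring_nf
    have hja2a : (j:ℝ) ^ a ≤ (j:ℝ) ^ (2 * a) :=
      Real.rpow_le_rpow_of_exponent_le (by exact_mod_cast hj) (by linarith)
    calc 2 * (j:ℝ) ^ a * ∑ k ∈ range (n + 1 - j), r ^ k
        ≤ 2 * (j:ℝ) ^ a * (1 + x⁻¹) := by
          apply mul_le_mul_of_nonneg_left (le_trans hgs hinv) (by positivity)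
      _ = 2 * (j:ℝ) ^ a + (4 / A) * ((j:ℝ) ^ a * (j:ℝ) ^ a) := by
          rw [hxinv]; field_simp; ring
      _ = 2 * (j:ℝ) ^ a + (4 / A) * (j:ℝ) ^ (2 * a) := by rw [hjaa]
      _ ≤ 2 * (j:ℝ) ^ (2 * a) + (4 / A) * (j:ℝ) ^ (2 * a) := by
          have : 2 * (j:ℝ) ^ a ≤ 2 * (j:ℝ) ^ (2 * a) := by linarith
          linarith
      _ = (2 + 4 / A) * (j:ℝ) ^ (2 * a) := by ring
  -- tail part
  have htail : ∑ i ∈ Icc j n, K * ((i : ℝ) ^ 2)⁻¹ ≤ 2 * K * (j:ℝ) ^ (2 * a) := by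
    have hsub : Icc j n ⊆ Icc 1 n := Finset.Icc_subset_Icc hj (le_refl n)
    have h1 : ∑ i ∈ Icc j n, K * ((i : ℝ) ^ 2)⁻¹ ≤ ∑ i ∈ Icc 1 n, K * ((i : ℝ) ^ 2)⁻¹ :=
      Finset.sum_le_sum_of_subset_of_nonneg hsub (fun i _ _ => by positivity)
    have h2 : ∑ i ∈ Icc 1 n, K * ((i : ℝ) ^ 2)⁻¹ = K * ∑ i ∈ Icc 1 n, ((i : ℝ) ^ 2)⁻¹ := by
      rw [Finset.mul_sum]
    have h3 : K * ∑ i ∈ Icc 1 n, ((i : ℝ) ^ 2)⁻¹ ≤ K * 2 := by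
      apply mul_le_mul_of_nonneg_left (sum_inv_sq_le n) (le_of_lt hKpos)
    have hj2a : (1:ℝ) ≤ (j:ℝ) ^ (2 * a) :=
      Real.one_le_rpow (by exact_mod_cast hj) (by linarith)
    calc ∑ i ∈ Icc j n, K * ((i : ℝ) ^ 2)⁻¹ ≤ K * 2 := by
          rw [h2] at h1; exact le_trans h1 h3
      _ = 2 * K := by ring
      _ ≤ 2 * K * (j:ℝ) ^ (2 * a) := le_mul_of_one_le_right (by positivity) hj2a
  calc ∑ i ∈ Icc j n, (i : ℝ) ^ a * Real.exp (-A * ∑ l ∈ Ico j i, (l : ℝ) ^ (-a))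
      ≤ (∑ i ∈ Icc j n, 2 * (j:ℝ) ^ a * r ^ (i - j)) +
        ∑ i ∈ Icc j n, K * ((i : ℝ) ^ 2)⁻¹ := hsplit
    _ ≤ (2 + 4 / A) * (j:ℝ) ^ (2 * a) + 2 * K * (j:ℝ) ^ (2 * a) :=
        add_le_add hgeom htail
    _ = ((2 + 4 / A) + 2 * K) * (j:ℝ) ^ (2 * a) := by ring
end

section
/- Let (η_i)_{i≥1} be random vectors with η_i = 0 for i < j, and suppose for all i ≥ j, E[‖η_{i+1}‖²/‖η_i‖² | F^i] ≤ exp(−A i^{-a}) with a ∈ [0,1), A > 0 (interpreting the ratio as 0 when η_i = 0). Let η̂_n = n^{-1} Σ_{i=1}^n η_i (with appropriate zero-padding to a common dimension). Then there is a constant C(a,A) such that n² E[‖η̂_n‖² | F^j] ≤ C(a,A) · j^{2a} · ‖η_j‖² almost surely. -/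
open MeasureTheory Finset

private lemma exp_ineq13 {x : ℝ} (hx : 0 < x) :
    1 ≤ (1 / x + 1) * (1 - Real.exp (-x)) := by
  have h1 : x + 1 ≤ Real.exp x := Real.add_one_le_exp x
  have h2 : Real.exp (-x) * (x + 1) ≤ 1 := by
    rw [Real.exp_neg, inv_mul_le_iff₀ (Real.exp_pos x), mul_one]
    exact h1
  have hy : 0 < Real.exp (-x) := Real.exp_pos _
  have heq : (1 / x + 1) * (1 - Real.exp (-x))
      = ((1 + x) * (1 - Real.exp (-x))) / x := by field_simp
  rw [heq, le_div_iff₀ hx, one_mul]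
  nlinarith

private lemma sumP_bound13 (A a : ℝ) (hA : 0 < A) (ha0 : 0 ≤ a) (ha1 : a < 1) :
    ∃ C₁ : ℝ, 0 < C₁ ∧ ∀ j n : ℕ, 1 ≤ j →
      ∑ i ∈ Icc j n, ∏ k ∈ Ico j i, Real.exp (-(A / 2) * (k : ℝ) ^ (-a))
        ≤ C₁ * (j : ℝ) ^ a := by
  have h1a : (0:ℝ) < 1 - a := by linarith
  have htend : Filter.Tendsto (fun i : ℕ => (i : ℝ) ^ (1 - a)) Filter.atTop Filter.atTop :=
    (tendsto_rpow_atTop h1a).comp tendsto_natCast_atTop_atTop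
  obtain ⟨M, hM⟩ := Filter.eventually_atTop.mp (htend.eventually_ge_atTop (4 * a / A))
  obtain ⟨m₀, hm₀def⟩ : ∃ m₀ : ℕ, m₀ = max M 1 := ⟨_, rfl⟩
  have hm₀1 : 1 ≤ m₀ := hm₀def ▸ le_max_right _ _
  have hm₀' : ∀ i : ℕ, m₀ ≤ i → 4 * a / A ≤ (i : ℝ) ^ (1 - a) :=
    fun i hi => hM i (le_trans (hm₀def ▸ le_max_left _ _) hi)
  refine ⟨(m₀ : ℝ) + 2 * ((2 / A) * (m₀ : ℝ) + 1), by positivity, ?_⟩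
  intro j n hj1
  obtain ⟨p, hpdef⟩ : ∃ p : ℕ → ℝ,
      p = fun i => ∏ k ∈ Ico j i, Real.exp (-(A / 2) * (k : ℝ) ^ (-a)) := ⟨_, rfl⟩
  rw [show (∑ i ∈ Icc j n, ∏ k ∈ Ico j i, Real.exp (-(A / 2) * (k : ℝ) ^ (-a)))
    = ∑ i ∈ Icc j n, p i by rw [hpdef]]
  have hp_pos : ∀ i, 0 < p i := fun i => hpdef ▸ Finset.prod_pos fun k _ => Real.exp_pos _
  have hp_le_one : ∀ i, p i ≤ 1 := by
    intro i
    rw [hpdef]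
    refine Finset.prod_le_one (fun k _ => (Real.exp_pos _).le) (fun k _ => ?_)
    rw [Real.exp_le_one_iff]
    have h0 : (0:ℝ) ≤ (k : ℝ) ^ (-a) := Real.rpow_nonneg (Nat.cast_nonneg k) _
    nlinarith
  have hp_succ : ∀ i, j ≤ i →
      p (i + 1) = p i * Real.exp (-(A / 2) * (i : ℝ) ^ (-a)) := by
    intro i hi
    simp only [hpdef]
    rw [Finset.prod_Ico_succ_top hi]
  obtain ⟨g, hgdef⟩ : ∃ g : ℕ → ℝ, g = fun i : ℕ => 2 / A * (i : ℝ) ^ a + 1 := ⟨_, rfl⟩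
  have hg_nonneg : ∀ i, 0 ≤ g i := by
    intro i
    have : (0:ℝ) ≤ (i : ℝ) ^ a := Real.rpow_nonneg (Nat.cast_nonneg i) _
    simp only [hgdef]
    positivity
  have fact1 : ∀ i, j ≤ i → p i ≤ g i * (p i - p (i + 1)) := by
    intro i hi
    have hi1 : 1 ≤ i := le_trans hj1 hi
    have hipos : (0:ℝ) < (i : ℝ) := by exact_mod_cast hi1
    have hrpos : (0:ℝ) < (i : ℝ) ^ (-a) := Real.rpow_pos_of_pos hipos _
    have hxpos : 0 < A / 2 * (i : ℝ) ^ (-a) := by positivity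
    have key := exp_ineq13 hxpos
    have hinv : 1 / (A / 2 * (i : ℝ) ^ (-a)) = 2 / A * (i : ℝ) ^ a := by
      rw [Real.rpow_neg hipos.le]
      have hne : ((i:ℝ) ^ a) ≠ 0 := ne_of_gt (Real.rpow_pos_of_pos hipos _)
      field_simp
    rw [hinv] at key
    have hneg : -(A / 2 * (i : ℝ) ^ (-a)) = -(A / 2) * (i : ℝ) ^ (-a) := by ring
    rw [hneg] at key
    have hdiff : p i - p (i + 1) = p i * (1 - Real.exp (-(A / 2) * (i : ℝ) ^ (-a))) := by
      rw [hp_succ i hi]; ring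
    rw [hdiff]
    calc p i = 1 * p i := (one_mul _).symm
    _ ≤ ((2 / A * (i : ℝ) ^ a + 1) * (1 - Real.exp (-(A / 2) * (i : ℝ) ^ (-a)))) * p i :=
        mul_le_mul_of_nonneg_right key (hp_pos i).le
    _ = g i * (p i * (1 - Real.exp (-(A / 2) * (i : ℝ) ^ (-a)))) := by
        simp only [hgdef]; ring
  have fact2 : ∀ i : ℕ, m₀ ≤ i → g (i + 1) - g i ≤ 1 / 2 := by
    intro i hi
    have hi1 : 1 ≤ i := le_trans hm₀1 hi
    have hipos : (0:ℝ) < (i : ℝ) := by exact_mod_cast hi1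
    have hcast : ((i + 1 : ℕ) : ℝ) = (i : ℝ) * (1 + 1 / (i : ℝ)) := by
      push_cast; field_simp
    have hbern : (1 + 1 / (i : ℝ)) ^ a ≤ 1 + a * (1 / (i : ℝ)) :=
      rpow_one_add_le_one_add_mul_self
        (le_trans (by norm_num : (-1:ℝ) ≤ 0) (by positivity)) ha0 ha1.le
    have hmul : ((i + 1 : ℕ) : ℝ) ^ a = (i : ℝ) ^ a * (1 + 1 / (i : ℝ)) ^ a := by
      rw [hcast, Real.mul_rpow hipos.le (by positivity)]
    have hpa : (0:ℝ) < (i : ℝ) ^ a := Real.rpow_pos_of_pos hipos _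
    have hup : ((i + 1 : ℕ) : ℝ) ^ a ≤ (i : ℝ) ^ a + a * ((i : ℝ) ^ a / (i : ℝ)) := by
      rw [hmul]
      calc (i : ℝ) ^ a * (1 + 1 / (i : ℝ)) ^ a ≤ (i : ℝ) ^ a * (1 + a * (1 / (i : ℝ))) :=
            mul_le_mul_of_nonneg_left hbern hpa.le
      _ = (i : ℝ) ^ a + a * ((i : ℝ) ^ a / (i : ℝ)) := by ring
    have hdiv : (i : ℝ) ^ a / (i : ℝ) = ((i : ℝ) ^ (1 - a))⁻¹ := by
      have h := Real.rpow_sub hipos a 1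
      rw [Real.rpow_one] at h
      rw [← h, show a - 1 = -(1 - a) by ring, Real.rpow_neg hipos.le]
    have ht : 4 * a / A ≤ (i : ℝ) ^ (1 - a) := hm₀' i hi
    have htpos : (0:ℝ) < (i : ℝ) ^ (1 - a) := Real.rpow_pos_of_pos hipos _
    have h4a : 4 * a ≤ A * (i : ℝ) ^ (1 - a) := by
      rw [div_le_iff₀ hA] at ht; linarith
    have hfin : 2 / A * (a * ((i : ℝ) ^ (1 - a))⁻¹) ≤ 1 / 2 := by
      have heq2 : 2 / A * (a * ((i : ℝ) ^ (1 - a))⁻¹)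
          = 4 * a / (2 * (A * (i : ℝ) ^ (1 - a))) := by
        field_simp; ring
      rw [heq2, div_le_div_iff₀ (by positivity) (by norm_num)]
      nlinarith
    have : g (i + 1) - g i = 2 / A * (((i + 1 : ℕ) : ℝ) ^ a - (i : ℝ) ^ a) := by
      simp only [hgdef]; push_cast; ring
    rw [this]
    calc 2 / A * (((i + 1 : ℕ) : ℝ) ^ a - (i : ℝ) ^ a)
        ≤ 2 / A * (a * ((i : ℝ) ^ (1 - a))⁻¹) := by
          apply mul_le_mul_of_nonneg_left _ (by positivity)
          rw [← hdiv]; linarith [hup]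
    _ ≤ 1 / 2 := hfin
  -- the key invariant
  obtain ⟨m, hmdef⟩ : ∃ m : ℕ, m = max j m₀ := ⟨_, rfl⟩
  have hjm : j ≤ m := hmdef ▸ le_max_left _ _
  have hm₀m : m₀ ≤ m := hmdef ▸ le_max_right _ _
  have invariant : ∀ N, m ≤ N →
      (∑ i ∈ Icc m N, p i) / 2 + g N * p (N + 1) ≤ g m := by
    intro N hN
    induction N, hN using Nat.le_induction with
    | base =>
        rw [Finset.Icc_self, Finset.sum_singleton]
        have h1 := fact1 m (hjm)
        rw [mul_sub] at h1
        have h2 : g m * p m ≤ g m := by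
          have := mul_le_mul_of_nonneg_left (hp_le_one m) (hg_nonneg m)
          simpa using this
        linarith [hp_pos m]
    | succ N hN IH =>
        rw [Finset.sum_Icc_succ_top (le_trans hN (Nat.le_succ N))]
        have h1 := fact1 (N + 1) (le_trans hjm (le_trans hN (Nat.le_succ N)))
        rw [mul_sub] at h1
        have h2 := fact2 N (le_trans hm₀m hN)
        have h3 : g (N + 1) * p (N + 1) ≤ g N * p (N + 1) + 1 / 2 * p (N + 1) := by
          nlinarith [mul_nonneg (show (0:ℝ) ≤ g N + 1 / 2 - g (N + 1) by linarith)
            (hp_pos (N + 1)).le]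
        linarith [hp_pos (N + 1)]
  -- combine
  have htail : ∑ i ∈ Icc m n, p i ≤ 2 * g m := by
    rcases le_or_gt m n with h | h
    · have := invariant n h
      nlinarith [hg_nonneg n, hp_pos (n+1), hg_nonneg m]
    · rw [Finset.Icc_eq_empty (by omega), Finset.sum_empty]
      nlinarith [hg_nonneg m]
  have hhead : ∑ i ∈ Ico j m, p i ≤ (m₀ : ℝ) := by
    calc ∑ i ∈ Ico j m, p i ≤ ∑ i ∈ Ico j m, 1 :=
          Finset.sum_le_sum fun i _ => hp_le_one i
    _ = ((m - j : ℕ) : ℝ) := by rw [Finset.sum_const, Nat.card_Ico]; simp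
    _ ≤ (m₀ : ℝ) := by
        have : m - j ≤ m₀ := by omega
        exact_mod_cast this
  have hsplit : ∑ i ∈ Icc j n, p i ≤ ∑ i ∈ Ico j m, p i + ∑ i ∈ Icc m n, p i := by
    have hdisj : Disjoint (Ico j m) (Icc m n) := by
      rw [Finset.disjoint_left]; intro x hx hx'
      simp only [mem_Ico, mem_Icc] at hx hx'; omega
    have hsub : Icc j n ⊆ Ico j m ∪ Icc m n := by
      intro x hx
      simp only [mem_Icc, mem_Ico, mem_union] at *
      omega
    calc ∑ i ∈ Icc j n, p i ≤ ∑ i ∈ Ico j m ∪ Icc m n, p i :=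
          Finset.sum_le_sum_of_subset_of_nonneg hsub fun i _ _ => (hp_pos i).le
    _ = _ := Finset.sum_union hdisj
  -- bound g m
  have hja : (1:ℝ) ≤ (j : ℝ) ^ a := by
    apply Real.one_le_rpow (by exact_mod_cast hj1) ha0
  have hmja : (m : ℝ) ^ a ≤ (m₀ : ℝ) * (j : ℝ) ^ a := by
    have hmle : (m : ℕ) ≤ j * m₀ := by
      rw [hmdef]
      apply max_le
      · exact Nat.le_mul_of_pos_right j (by omega)
      · exact Nat.le_mul_of_pos_left m₀ (by omega)
    calc (m : ℝ) ^ a ≤ ((j * m₀ : ℕ) : ℝ) ^ a :=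
          Real.rpow_le_rpow (Nat.cast_nonneg m) (by exact_mod_cast hmle) ha0
    _ = (j : ℝ) ^ a * (m₀ : ℝ) ^ a := by
        push_cast; rw [Real.mul_rpow (Nat.cast_nonneg j) (Nat.cast_nonneg m₀)]
    _ ≤ (j : ℝ) ^ a * (m₀ : ℝ) := by
        apply mul_le_mul_of_nonneg_left _ (by positivity)
        calc (m₀ : ℝ) ^ a ≤ (m₀ : ℝ) ^ (1:ℝ) :=
              Real.rpow_le_rpow_of_exponent_le (by exact_mod_cast hm₀1) ha1.le
        _ = (m₀ : ℝ) := Real.rpow_one _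
    _ = (m₀ : ℝ) * (j : ℝ) ^ a := by ring
  have hgm : g m ≤ 2 / A * ((m₀ : ℝ) * (j : ℝ) ^ a) + 1 := by
    simp only [hgdef]
    have := mul_le_mul_of_nonneg_left hmja (by positivity : (0:ℝ) ≤ 2 / A)
    linarith
  have hm₀0 : (0:ℝ) ≤ (m₀ : ℝ) := Nat.cast_nonneg _
  calc ∑ i ∈ Icc j n, p i ≤ ∑ i ∈ Ico j m, p i + ∑ i ∈ Icc m n, p i := hsplit
  _ ≤ (m₀ : ℝ) + 2 * g m := by linarith
  _ ≤ (m₀ : ℝ) + 2 * (2 / A * ((m₀ : ℝ) * (j : ℝ) ^ a) + 1) := by linarith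
  _ ≤ ((m₀ : ℝ) + 2 * ((2 / A) * (m₀ : ℝ) + 1)) * (j : ℝ) ^ a := by
      have h1 : (m₀:ℝ) ≤ (m₀:ℝ) * (j:ℝ)^a := le_mul_of_one_le_right hm₀0 hja
      have h2 : (2:ℝ) ≤ 2 * (j:ℝ)^a := by linarith
      have h3 : (0:ℝ) < A := hA
      ring_nf
      nlinarith [mul_nonneg hm₀0 (by positivity : (0:ℝ) ≤ (j:ℝ)^a)]

/-- Lemma 4 (summable lemma): if `η_i = 0` for `i < j` and the adapted vectors satisfy
the exponential contraction `E[‖η_{i+1}‖² | F^i] ≤ exp(−A i^{−a}) ‖η_i‖²` for `i ≥ j`,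
then the averages `η̂_n = n⁻¹ ∑_{i=1}^n η_i` satisfy
`n² E[‖η̂_n‖² | F^j] ≤ C(a,A) j^{2a} ‖η_j‖²` almost surely. -/
theorem stmt_13 {Ω : Type*} {m0 : MeasurableSpace Ω} (μ : Measure Ω)
    [IsProbabilityMeasure μ] (ℱ : Filtration ℕ m0)
    {V : Type*} [NormedAddCommGroup V] [InnerProductSpace ℝ V]
    (η : ℕ → Ω → V) (j : ℕ) (hj : 1 ≤ j) (A a : ℝ)
    (hA : 0 < A) (ha0 : 0 ≤ a) (ha1 : a < 1)
    (hzero : ∀ i, i < j → η i = 0)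
    (hadapted : ∀ i, StronglyMeasurable[ℱ i] (η i))
    (hL2 : ∀ i, MemLp (fun ω => ‖η i ω‖ ^ 2) 1 μ)
    (hcontr : ∀ i, j ≤ i →
      (μ[fun ω => ‖η (i + 1) ω‖ ^ 2 | ℱ i]) ≤ᵐ[μ]
        fun ω => Real.exp (-A * (i : ℝ) ^ (-a)) * ‖η i ω‖ ^ 2) :
    ∃ C : ℝ, 0 < C ∧ ∀ n : ℕ, 1 ≤ n →
      ∀ᵐ ω ∂μ,
        (n : ℝ) ^ 2 *
            (μ[fun ω' => ‖(n : ℝ)⁻¹ • ∑ i ∈ Icc 1 n, η i ω'‖ ^ 2 | ℱ j]) ω ≤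
          C * (j : ℝ) ^ (2 * a) * ‖η j ω‖ ^ 2 := by
  obtain ⟨C₁, hC₁, hC₁b⟩ := sumP_bound13 A a hA ha0 ha1
  refine ⟨C₁ ^ 2, by positivity, ?_⟩
  intro n hn
  -- notation
  set p : ℕ → ℝ := fun i => ∏ k ∈ Ico j i, Real.exp (-(A / 2) * (k : ℝ) ^ (-a)) with hpdef
  have hp_pos : ∀ i, 0 < p i := fun i => Finset.prod_pos fun k _ => Real.exp_pos _
  have hp_succ : ∀ i, j ≤ i →
      p (i + 1) = p i * Real.exp (-(A / 2) * (i : ℝ) ^ (-a)) := by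
    intro i hi
    simp only [hpdef]
    rw [Finset.prod_Ico_succ_top hi]
  set P : ℝ := ∑ i ∈ Icc j n, p i with hPdef
  have hP_nonneg : 0 ≤ P := Finset.sum_nonneg fun i _ => (hp_pos i).le
  have hP_le : P ≤ C₁ * (j : ℝ) ^ a := hC₁b j n hj
  set B : ℕ → Ω → ℝ := fun i ω => ‖η i ω‖ ^ 2 with hBdef
  have hBnonneg : ∀ i ω, 0 ≤ B i ω := fun i ω => sq_nonneg _
  have hBint : ∀ i, Integrable (B i) μ := fun i => memLp_one_iff_integrable.mp (hL2 i)
  have hBsm : ∀ i, StronglyMeasurable[ℱ i] (B i) := by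
    intro i
    have := (hadapted i).norm.mul (hadapted i).norm
    simpa [hBdef, pow_two, Pi.mul_def] using this
  -- Lemma A: conditional contraction iterated
  have lemA : ∀ i, j ≤ i →
      μ[B i | ℱ j] ≤ᵐ[μ] fun ω => p i ^ 2 * B j ω := by
    intro i hi
    induction i, hi using Nat.le_induction with
    | base =>
        rw [condExp_of_stronglyMeasurable (ℱ.le j) (hBsm j) (hBint j)]
        have hpj : p j = 1 := by simp [hpdef]
        filter_upwards with ω
        simp [hpj]
    | succ i hi IH =>
        have hq : p (i + 1) ^ 2
            = Real.exp (-A * (i : ℝ) ^ (-a)) * p i ^ 2 := by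
          rw [hp_succ i hi, mul_pow, sq (Real.exp _), ← Real.exp_add]
          rw [show -(A / 2) * (i:ℝ) ^ (-a) + -(A / 2) * (i:ℝ) ^ (-a)
            = -A * (i:ℝ) ^ (-a) by ring]
          ring
        calc μ[B (i + 1) | ℱ j]
            =ᵐ[μ] μ[μ[B (i + 1) | ℱ i] | ℱ j] :=
              (condExp_condExp_of_le (ℱ.mono hi) (ℱ.le i)).symm
        _ ≤ᵐ[μ] μ[fun ω => Real.exp (-A * (i:ℝ) ^ (-a)) * B i ω | ℱ j] :=
              condExp_mono integrable_condExp ((hBint i).const_mul _) (hcontr i hi)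
        _ =ᵐ[μ] fun ω => Real.exp (-A * (i:ℝ) ^ (-a)) * (μ[B i | ℱ j]) ω := by
              have hsmul := condExp_smul (μ := μ) (m := ℱ j)
                (Real.exp (-A * (i:ℝ) ^ (-a))) (B i)
              filter_upwards [hsmul] with ω hω
              simpa [smul_eq_mul, Pi.smul_def] using hω
        _ ≤ᵐ[μ] fun ω => p (i + 1) ^ 2 * B j ω := by
              filter_upwards [IH] with ω hω
              rw [hq, mul_assoc]
              exact mul_le_mul_of_nonneg_left hω (Real.exp_pos _).le
  -- pointwise Cauchy-Schwarz bound
  have hpoint : ∀ ω, ‖∑ i ∈ Icc 1 n, η i ω‖ ^ 2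
      ≤ ∑ i ∈ Icc j n, (P / p i) * B i ω := by
    intro ω
    have hsumeq : ∑ i ∈ Icc j n, η i ω = ∑ i ∈ Icc 1 n, η i ω := by
      apply Finset.sum_subset (Finset.Icc_subset_Icc_left hj)
      intro x hx hnx
      have hxj : x < j := by
        simp only [mem_Icc] at hx hnx
        omega
      simp [hzero x hxj]
    rw [← hsumeq]
    have h1 : ‖∑ i ∈ Icc j n, η i ω‖ ≤ ∑ i ∈ Icc j n, ‖η i ω‖ :=
      norm_sum_le _ _
    have h2 : ‖∑ i ∈ Icc j n, η i ω‖ ^ 2 ≤ (∑ i ∈ Icc j n, ‖η i ω‖) ^ 2 :=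
      pow_le_pow_left₀ (norm_nonneg _) h1 2
    refine h2.trans ?_
    have hcs := Finset.sum_mul_sq_le_sq_mul_sq (Icc j n)
      (fun i => Real.sqrt (p i)) (fun i => ‖η i ω‖ / Real.sqrt (p i))
    have hlhs : ∑ i ∈ Icc j n, Real.sqrt (p i) * (‖η i ω‖ / Real.sqrt (p i))
        = ∑ i ∈ Icc j n, ‖η i ω‖ := by
      apply Finset.sum_congr rfl
      intro i _
      rw [mul_comm, div_mul_cancel₀]
      exact ne_of_gt (Real.sqrt_pos.mpr (hp_pos i))
    rw [hlhs] at hcs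
    refine hcs.trans ?_
    have hrhs : (∑ i ∈ Icc j n, Real.sqrt (p i) ^ 2)
        * ∑ i ∈ Icc j n, (‖η i ω‖ / Real.sqrt (p i)) ^ 2
        = ∑ i ∈ Icc j n, (P / p i) * B i ω := by
      have e1 : ∑ i ∈ Icc j n, Real.sqrt (p i) ^ 2 = P := by
        apply Finset.sum_congr rfl
        intro i _
        exact Real.sq_sqrt (hp_pos i).le
      rw [e1, Finset.mul_sum]
      apply Finset.sum_congr rfl
      intro i _
      rw [div_pow, Real.sq_sqrt (hp_pos i).le]
      simp only [hBdef]
      field_simp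
    rw [← hrhs]
  -- conditional expectation of the majorant
  set Hf : ℕ → Ω → ℝ := fun i => (P / p i) • B i with hHfdef
  have hHfint : ∀ i ∈ Icc j n, Integrable (Hf i) μ := fun i _ => (hBint i).smul _
  have hHsum : μ[∑ i ∈ Icc j n, Hf i | ℱ j]
      =ᵐ[μ] ∑ i ∈ Icc j n, μ[Hf i | ℱ j] := condExp_finset_sum hHfint (ℱ j)
  have hHeach : ∀ᵐ ω ∂μ, ∀ i, (μ[Hf i | ℱ j]) ω = (P / p i) * (μ[B i | ℱ j]) ω := by
    rw [ae_all_iff]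
    intro i
    filter_upwards [condExp_smul (μ := μ) (m := ℱ j) (P / p i) (B i)] with ω hω
    simpa [smul_eq_mul] using hω
  have hBbound : ∀ᵐ ω ∂μ, ∀ i, j ≤ i → (μ[B i | ℱ j]) ω ≤ p i ^ 2 * B j ω := by
    rw [ae_all_iff]
    intro i
    by_cases hij : j ≤ i
    · filter_upwards [lemA i hij] with ω hω
      exact fun _ => hω
    · filter_upwards with ω hω
      exact absurd hω hij
  -- integrability of F
  set F : Ω → ℝ := fun ω => ‖∑ i ∈ Icc 1 n, η i ω‖ ^ 2 with hFdef
  have hFsm : StronglyMeasurable F := by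
    have hs : StronglyMeasurable (fun ω => ∑ i ∈ Icc 1 n, η i ω) :=
      Finset.stronglyMeasurable_fun_sum _ fun i _ => (hadapted i).mono (ℱ.le i)
    have := hs.norm.mul hs.norm
    simpa [hFdef, pow_two, Pi.mul_def] using this
  have hHsumint : Integrable (∑ i ∈ Icc j n, Hf i) μ := by
    have h := integrable_finset_sum (Icc j n) hHfint
    exact h.congr (Filter.Eventually.of_forall fun ω => (Finset.sum_apply _ _ _).symm)
  have hFH : ∀ ω, F ω ≤ (∑ i ∈ Icc j n, Hf i) ω := by
    intro ω
    rw [Finset.sum_apply]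
    simpa [hHfdef, smul_eq_mul] using hpoint ω
  have hFint : Integrable F μ := by
    refine hHsumint.mono' hFsm.aestronglyMeasurable ?_
    filter_upwards with ω
    rw [Real.norm_of_nonneg (by positivity)]
    exact hFH ω
  have hFmono : μ[F | ℱ j] ≤ᵐ[μ] μ[∑ i ∈ Icc j n, Hf i | ℱ j] :=
    condExp_mono hFint hHsumint (Filter.Eventually.of_forall hFH)
  -- the scaled function
  have hGeq : (fun ω' => ‖(n : ℝ)⁻¹ • ∑ i ∈ Icc 1 n, η i ω'‖ ^ 2)
      = ((n : ℝ) ^ 2)⁻¹ • F := by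
    funext ω
    simp only [hFdef, Pi.smul_apply, smul_eq_mul, norm_smul, norm_inv,
      Real.norm_natCast, mul_pow, inv_pow]
  have hGsmul : μ[fun ω' => ‖(n : ℝ)⁻¹ • ∑ i ∈ Icc 1 n, η i ω'‖ ^ 2 | ℱ j]
      =ᵐ[μ] ((n : ℝ) ^ 2)⁻¹ • μ[F | ℱ j] := by
    rw [hGeq]
    exact condExp_smul _ _ _
  have hn2 : ((n : ℝ) ^ 2) ≠ 0 := by
    have : (0:ℝ) < n := by exact_mod_cast hn
    positivity
  have hj2a : (j : ℝ) ^ (2 * a) = ((j : ℝ) ^ a) ^ 2 := by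
    rw [← Real.rpow_natCast ((j:ℝ) ^ a) 2, ← Real.rpow_mul (Nat.cast_nonneg j)]
    norm_num
    ring_nf
  filter_upwards [hGsmul, hFmono, hHsum, hHeach, hBbound] with ω hG hmono hsum heach hbound
  have step1 : (n : ℝ) ^ 2 *
      (μ[fun ω' => ‖(n : ℝ)⁻¹ • ∑ i ∈ Icc 1 n, η i ω'‖ ^ 2 | ℱ j]) ω
      = (μ[F | ℱ j]) ω := by
    rw [hG]
    simp only [Pi.smul_apply, smul_eq_mul]
    field_simp
  rw [step1]
  have step2 : (μ[F | ℱ j]) ω ≤ ∑ i ∈ Icc j n, (P / p i) * (μ[B i | ℱ j]) ω := by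
    refine (hmono.trans (le_of_eq hsum)).trans ?_
    rw [Finset.sum_apply]
    exact le_of_eq (Finset.sum_congr rfl fun i _ => heach i)
  have step3 : ∑ i ∈ Icc j n, (P / p i) * (μ[B i | ℱ j]) ω
      ≤ ∑ i ∈ Icc j n, (P * p i) * B j ω := by
    apply Finset.sum_le_sum
    intro i hi
    have hij : j ≤ i := (mem_Icc.mp hi).1
    have hcoef : 0 ≤ P / p i := div_nonneg hP_nonneg (hp_pos i).le
    calc (P / p i) * (μ[B i | ℱ j]) ω ≤ (P / p i) * (p i ^ 2 * B j ω) :=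
          mul_le_mul_of_nonneg_left (hbound i hij) hcoef
    _ = (P * p i) * B j ω := by
        field_simp
  have step4 : ∑ i ∈ Icc j n, (P * p i) * B j ω = P * P * B j ω := by
    rw [← Finset.sum_mul]
    rw [← Finset.mul_sum]
  have step5 : P * P * B j ω ≤ C₁ ^ 2 * (j : ℝ) ^ (2 * a) * B j ω := by
    rw [hj2a]
    have hPP : P * P ≤ (C₁ * (j:ℝ) ^ a) * (C₁ * (j:ℝ) ^ a) :=
      mul_le_mul hP_le hP_le hP_nonneg (le_trans hP_nonneg hP_le)
    have := mul_le_mul_of_nonneg_right hPP (hBnonneg j ω)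
    calc P * P * B j ω ≤ (C₁ * (j:ℝ) ^ a) * (C₁ * (j:ℝ) ^ a) * B j ω := this
    _ = C₁ ^ 2 * ((j:ℝ) ^ a) ^ 2 * B j ω := by ring
  calc (μ[F | ℱ j]) ω ≤ ∑ i ∈ Icc j n, (P / p i) * (μ[B i | ℱ j]) ω := step2
  _ ≤ ∑ i ∈ Icc j n, (P * p i) * B j ω := step3
  _ = P * P * B j ω := step4
  _ ≤ C₁ ^ 2 * (j : ℝ) ^ (2 * a) * B j ω := step5
end

section
/- Let c := a/2 + b − ξ. If c > 1, then Σ_{j=1}^{n-1} (Σ_{i=j+1}^{n} i^{-c})² ≲ n^{3-2c} ∨ log n; if c = 1, then Σ_{j=1}^{n-1} (Σ_{i=j+1}^{n} i^{-1})² ≲ n (log n)²; and if c < 1, then Σ_{j=1}^{n-1} (Σ_{i=j+1}^{n} i^{-c})² ≲ n^{3-2c}, where ≲ hides a constant depending only on c. -/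
open Finset

lemma harm_le_log : ∀ n : ℕ, 1 ≤ n → ∑ i ∈ Icc 2 n, (i:ℝ)⁻¹ ≤ Real.log n := by
  intro n hn
  induction n with
  | zero => omega
  | succ m ih =>
    rcases Nat.eq_or_lt_of_le hn with h | h
    · simp [← h]
    · have hm : 1 ≤ m := by omega
      rw [Finset.sum_Icc_succ_top (by omega)]
      have hmpos : (0:ℝ) < m := by exact_mod_cast hm
      have key : ((m:ℝ)+1)⁻¹ ≤ Real.log (m+1) - Real.log m := by
        have h1 : Real.log ((m:ℝ)/(m+1)) ≤ (m:ℝ)/(m+1) - 1 :=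
          Real.log_le_sub_one_of_pos (by positivity)
        have h2 : Real.log ((m:ℝ)/(m+1)) = Real.log m - Real.log (m+1) :=
          Real.log_div (by positivity) (by positivity)
        have h3 : (m:ℝ)/(m+1) - 1 = -((m:ℝ)+1)⁻¹ := by field_simp; ring
        rw [h2, h3] at h1; linarith
      have := ih hm
      push_cast
      push_cast at key
      linarith

lemma sum_rpow_lt_one (d : ℝ) (hd0 : 0 < d) (hd1 : d < 1) :
    ∀ m : ℕ, ∑ j ∈ Icc 1 m, (j:ℝ) ^ (-d) ≤ (m:ℝ) ^ (1-d) / (1-d) := by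
  intro m
  induction m with
  | zero => simp [Real.zero_rpow (by linarith : (1:ℝ)-d ≠ 0)]
  | succ m ih =>
    rw [Finset.sum_Icc_succ_top (by omega)]
    have hm1 : (0:ℝ) < (m:ℝ)+1 := by positivity
    have hm0 : (0:ℝ) ≤ (m:ℝ) := by positivity
    have amgm : (m:ℝ) ^ (1-d) * ((m:ℝ)+1) ^ d ≤ (1-d) * m + d * ((m:ℝ)+1) :=
      Real.geom_mean_le_arith_mean2_weighted (by linarith) (le_of_lt hd0) hm0 (le_of_lt hm1)
        (by ring)
    have hsplit : ((m:ℝ)+1) ^ (1-d) = (((m:ℝ)+1) ^ (-d)) * ((m:ℝ)+1) := by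
      rw [show (1:ℝ)-d = -d + 1 by ring, Real.rpow_add hm1, Real.rpow_one]
    have hpq : (((m:ℝ)+1) ^ (-d)) * (((m:ℝ)+1) ^ d) = 1 := by
      rw [← Real.rpow_add hm1]; simp
    have hp0 : (0:ℝ) < ((m:ℝ)+1) ^ (-d) := Real.rpow_pos_of_pos hm1 _
    have h4 : (m:ℝ)^(1-d) ≤ (((m:ℝ)+1)) ^ (-d) * ((1-d)*m + d*((m:ℝ)+1)) := by
      calc (m:ℝ)^(1-d) = (((m:ℝ)+1)) ^ (-d) * ((m:ℝ)^(1-d) * ((m:ℝ)+1)^d) := by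
            rw [← mul_assoc, mul_comm ((((m:ℝ)+1)) ^ (-d)), mul_assoc, hpq, mul_one]
        _ ≤ _ := mul_le_mul_of_nonneg_left amgm hp0.le
    have key : (m:ℝ) ^ (1-d) + (1-d) * ((m:ℝ)+1) ^ (-d) ≤ ((m:ℝ)+1) ^ (1-d) := by
      rw [hsplit]; nlinarith [h4]
    have h1d : (0:ℝ) < 1 - d := by linarith
    push_cast
    push_cast at key ih
    calc ∑ j ∈ Icc 1 m, (j:ℝ) ^ (-d) + ((m:ℝ)+1) ^ (-d)
        ≤ (m:ℝ) ^ (1-d) / (1-d) + ((m:ℝ)+1) ^ (-d) := by linarith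
      _ = ((m:ℝ)^(1-d) + (1-d) * ((m:ℝ)+1) ^ (-d)) / (1-d) := by field_simp
      _ ≤ ((m:ℝ)+1) ^ (1-d) / (1-d) := by gcongr

lemma tail_rpow (d : ℝ) (hd : 1 < d) (j : ℕ) (hj : 1 ≤ j) (n : ℕ) :
    ∑ i ∈ Icc (j+1) n, (i:ℝ) ^ (-d) ≤ (j:ℝ) ^ (1-d) / (d-1) := by
  have hd1 : (0:ℝ) < d - 1 := by linarith
  rcases le_or_gt n j with h | h
  · rw [Finset.Icc_eq_empty (by omega)]
    simp only [Finset.sum_empty]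
    positivity
  · have main : ∀ n : ℕ, j ≤ n →
        ∑ i ∈ Icc (j+1) n, (i:ℝ) ^ (-d) ≤ ((j:ℝ) ^ (1-d) - (n:ℝ) ^ (1-d)) / (d-1) := by
      intro n hn
      induction n, hn using Nat.le_induction with
      | base => rw [Finset.Icc_eq_empty (by omega)]; simp
      | succ n hn ih =>
        rw [Finset.sum_Icc_succ_top (by omega)]
        have hn1 : (1:ℝ) ≤ (n:ℝ) := by exact_mod_cast le_trans hj hn
        have hn0 : (0:ℝ) < (n:ℝ) := by linarith
        have hnn : (0:ℝ) < (n:ℝ)+1 := by linarith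
        have bern : 1 + d * (1/(n:ℝ)) ≤ (1 + 1/(n:ℝ)) ^ d :=
          one_add_mul_self_le_rpow_one_add
            (le_trans (by norm_num) (by positivity : (0:ℝ) ≤ 1/(n:ℝ))) hd.le
        have hB : ((n:ℝ)+1) ^ d = (n:ℝ) ^ d * (1 + 1/(n:ℝ)) ^ d := by
          rw [← Real.mul_rpow hn0.le (by positivity)]
          congr 1; field_simp
        have hA0 : (0:ℝ) < (n:ℝ) ^ d := Real.rpow_pos_of_pos hn0 _
        have hB0 : (0:ℝ) < ((n:ℝ)+1) ^ d := Real.rpow_pos_of_pos hnn _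
        have hBA : (n:ℝ) ^ d * (((n:ℝ) + d)/(n:ℝ)) ≤ ((n:ℝ)+1) ^ d := by
          rw [hB]
          have : ((n:ℝ) + d)/(n:ℝ) = 1 + d * (1/(n:ℝ)) := by field_simp
          rw [this]
          exact mul_le_mul_of_nonneg_left bern hA0.le
        have hinvB : ((n:ℝ)+1) ^ (-d) = (((n:ℝ)+1) ^ d)⁻¹ := by
          rw [Real.rpow_neg hnn.le]
        have hninv : (n:ℝ) ^ (1-d) = (n:ℝ) / (n:ℝ) ^ d := by
          rw [show (1:ℝ)-d = 1 + -d by ring, Real.rpow_add hn0, Real.rpow_one,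
            Real.rpow_neg hn0.le, div_eq_mul_inv]
        have key : ((n:ℝ) + d) * ((n:ℝ)+1) ^ (-d) ≤ (n:ℝ) ^ (1-d) := by
          have hBA' := mul_le_mul_of_nonneg_left hBA hn0.le
          have hBA'' : (n:ℝ) ^ d * ((n:ℝ) + d) ≤ (n:ℝ) * ((n:ℝ)+1) ^ d := by
            calc (n:ℝ) ^ d * ((n:ℝ) + d) = (n:ℝ) * ((n:ℝ) ^ d * (((n:ℝ) + d)/(n:ℝ))) := by
                  field_simp
              _ ≤ _ := hBA'
          rw [hinvB, hninv, mul_inv_le_iff₀ hB0, div_mul_eq_mul_div, le_div_iff₀ hA0]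
          nlinarith [hBA'']
        have hsplit : ((n:ℝ)+1) ^ (1-d) = ((n:ℝ)+1) * ((n:ℝ)+1) ^ (-d) := by
          rw [show (1:ℝ)-d = 1 + -d by ring, Real.rpow_add hnn, Real.rpow_one]
        have step : ((n:ℝ)+1) ^ (-d) ≤ ((n:ℝ) ^ (1-d) - ((n:ℝ)+1) ^ (1-d)) / (d-1) := by
          rw [le_div_iff₀ hd1, hsplit]
          nlinarith [key]
        push_cast
        push_cast at ih step
        calc ∑ i ∈ Icc (j+1) n, (i:ℝ) ^ (-d) + ((n:ℝ)+1) ^ (-d)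
            ≤ ((j:ℝ) ^ (1-d) - (n:ℝ) ^ (1-d)) / (d-1)
              + ((n:ℝ) ^ (1-d) - ((n:ℝ)+1) ^ (1-d)) / (d-1) := by linarith
          _ = ((j:ℝ) ^ (1-d) - ((n:ℝ)+1) ^ (1-d)) / (d-1) := by ring
    have hn0 : (0:ℝ) ≤ (n:ℝ) ^ (1-d) := Real.rpow_nonneg (by positivity) _
    calc ∑ i ∈ Icc (j+1) n, (i:ℝ) ^ (-d)
        ≤ ((j:ℝ) ^ (1-d) - (n:ℝ) ^ (1-d)) / (d-1) := main n h.le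
      _ ≤ (j:ℝ) ^ (1-d) / (d-1) := by gcongr; linarith

lemma sum_Icc_one_split (f : ℕ → ℝ) (m : ℕ) (hm : 1 ≤ m) :
    ∑ j ∈ Icc 1 m, f j = f 1 + ∑ j ∈ Icc 2 m, f j := by
  have h : Icc 1 m = insert 1 (Icc 2 m) := by
    ext x; simp only [Finset.mem_Icc, Finset.mem_insert]; omega
  rw [h, Finset.sum_insert (by simp [Finset.mem_Icc])]

/-- Deterministic double-sum estimates in the proof of Lemma 3, with `c = a/2 + b − ξ`:
if `c > 1` the sum is `≲ n^{3−2c} ∨ log n`; if `c = 1` it is `≲ n (log n)²`; and if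
`c < 1` it is `≲ n^{3−2c}`. -/
theorem stmt_18 (a b ξ : ℝ) (ha0 : 0 ≤ a) (ha1 : a ≤ 1) (hb : 0 < b) (hξ : 0 ≤ ξ)
    (c : ℝ) (hc : c = a / 2 + b - ξ) (hcpos : 0 < c) :
    (1 < c → ∃ K : ℝ, 0 < K ∧ ∀ n : ℕ, 1 ≤ n →
        ∑ j ∈ Icc 1 (n - 1), (∑ i ∈ Icc (j + 1) n, (i : ℝ) ^ (-c)) ^ 2 ≤
          K * max ((n : ℝ) ^ (3 - 2 * c)) (Real.log n)) ∧
      (c = 1 → ∃ K : ℝ, 0 < K ∧ ∀ n : ℕ, 1 ≤ n →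
        ∑ j ∈ Icc 1 (n - 1), (∑ i ∈ Icc (j + 1) n, (i : ℝ)⁻¹) ^ 2 ≤
          K * n * Real.log n ^ 2) ∧
      (c < 1 → ∃ K : ℝ, 0 < K ∧ ∀ n : ℕ, 1 ≤ n →
        ∑ j ∈ Icc 1 (n - 1), (∑ i ∈ Icc (j + 1) n, (i : ℝ) ^ (-c)) ^ 2 ≤
          K * (n : ℝ) ^ (3 - 2 * c)) := by
  refine ⟨?_, ?_, ?_⟩
  · -- case 1 < c
    intro h1
    have hc1 : (0:ℝ) < c - 1 := by linarith
    -- uniform reduction to the sum of j^(-(2c-2))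
    have hT : ∀ n : ℕ, 1 ≤ n →
        ∑ j ∈ Icc 1 (n - 1), (∑ i ∈ Icc (j + 1) n, (i : ℝ) ^ (-c)) ^ 2 ≤
          (∑ j ∈ Icc 1 (n-1), (j:ℝ) ^ (-(2*c-2))) / (c-1)^2 := by
      intro n hn
      rw [Finset.sum_div]
      refine Finset.sum_le_sum ?_
      intro j hj
      have hj1 : 1 ≤ j := (Finset.mem_Icc.mp hj).1
      have hjR : (0:ℝ) ≤ (j:ℝ) := by positivity
      have hS0 : (0:ℝ) ≤ ∑ i ∈ Icc (j + 1) n, (i : ℝ) ^ (-c) :=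
        Finset.sum_nonneg fun i _ => Real.rpow_nonneg (by positivity) _
      have hSle : ∑ i ∈ Icc (j + 1) n, (i : ℝ) ^ (-c) ≤ (j:ℝ) ^ (1-c) / (c-1) :=
        tail_rpow c h1 j hj1 n
      have hsq : ((j:ℝ) ^ (1-c)) ^ 2 = (j:ℝ) ^ (-(2*c-2)) := by
        rw [← Real.rpow_natCast ((j:ℝ) ^ (1-c)) 2, ← Real.rpow_mul hjR]
        norm_num
        congr 1
        ring
      calc (∑ i ∈ Icc (j + 1) n, (i : ℝ) ^ (-c)) ^ 2
          ≤ ((j:ℝ) ^ (1-c) / (c-1)) ^ 2 := by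
            exact pow_le_pow_left₀ hS0 hSle 2
        _ = (j:ℝ) ^ (-(2*c-2)) / (c-1)^2 := by rw [div_pow, hsq]
    rcases lt_trichotomy c (3/2) with h32 | h32 | h32
    · -- 1 < c < 3/2 : d = 2c-2 ∈ (0,1)
      have hd0 : (0:ℝ) < 2*c-2 := by linarith
      have hd1 : 2*c-2 < 1 := by linarith
      have h1d : (0:ℝ) < 1-(2*c-2) := by linarith
      refine ⟨1/((c-1)^2*(1-(2*c-2))), by positivity, fun n hn => ?_⟩
      have hnR : (1:ℝ) ≤ (n:ℝ) := by exact_mod_cast hn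
      have hm : ((n-1:ℕ):ℝ) ≤ (n:ℝ) := by
        have : (n-1:ℕ) ≤ n := Nat.sub_le n 1
        exact_mod_cast this
      have hU := sum_rpow_lt_one (2*c-2) hd0 hd1 (n-1)
      have hmono : ((n-1:ℕ):ℝ) ^ (1-(2*c-2)) ≤ (n:ℝ) ^ (1-(2*c-2)) :=
        Real.rpow_le_rpow (by positivity) hm (by linarith)
      have heq : (n:ℝ) ^ (1-(2*c-2)) = (n:ℝ) ^ (3-2*c) := by
        congr 1; ring
      have hmax : (n:ℝ) ^ (3-2*c) ≤ max ((n:ℝ) ^ (3-2*c)) (Real.log n) := le_max_left _ _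
      calc ∑ j ∈ Icc 1 (n - 1), (∑ i ∈ Icc (j + 1) n, (i : ℝ) ^ (-c)) ^ 2
          ≤ (∑ j ∈ Icc 1 (n-1), (j:ℝ) ^ (-(2*c-2))) / (c-1)^2 := hT n hn
        _ ≤ (((n-1:ℕ):ℝ) ^ (1-(2*c-2)) / (1-(2*c-2))) / (c-1)^2 := by gcongr
        _ ≤ ((n:ℝ) ^ (3-2*c) / (1-(2*c-2))) / (c-1)^2 := by
            rw [← heq]; gcongr
        _ = 1/((c-1)^2*(1-(2*c-2))) * ((n:ℝ) ^ (3-2*c)) := by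
            have e1 : ((c-1)^2 : ℝ) ≠ 0 := by positivity
            have e2 : (1-(2*c-2) : ℝ) ≠ 0 := by positivity
            field_simp
        _ ≤ 1/((c-1)^2*(1-(2*c-2))) * max ((n:ℝ) ^ (3-2*c)) (Real.log n) := by
            gcongr
    · -- c = 3/2
      subst h32
      refine ⟨1/((3/2-1:ℝ)^2) * 2, by norm_num, fun n hn => ?_⟩
      have hnR : (1:ℝ) ≤ (n:ℝ) := by exact_mod_cast hn
      have hlog0 : 0 ≤ Real.log n := Real.log_nonneg hnR
      have h3c : (3:ℝ) - 2*(3/2) = 0 := by norm_num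
      have hn0 : (0:ℝ) < (n:ℝ) := by linarith
      have hpow1 : (n:ℝ) ^ ((3:ℝ) - 2*(3/2)) = 1 := by rw [h3c, Real.rpow_zero]
      have hmax1 : (1:ℝ) ≤ max ((n:ℝ) ^ ((3:ℝ) - 2*(3/2))) (Real.log n) := by
        rw [hpow1]; exact le_max_left _ _
      have hmaxlog : Real.log n ≤ max ((n:ℝ) ^ ((3:ℝ) - 2*(3/2))) (Real.log n) :=
        le_max_right _ _
      have hU : ∑ j ∈ Icc 1 (n-1), (j:ℝ) ^ (-(2*(3/2:ℝ)-2)) ≤ 1 + Real.log n := by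
        have hexp : -(2*(3/2:ℝ)-2) = -1 := by norm_num
        rcases Nat.eq_or_lt_of_le hn with h | h
        · rw [Finset.Icc_eq_empty (by omega)]
          simp only [Finset.sum_empty]
          linarith
        · have hm1 : 1 ≤ n - 1 := by omega
          rw [sum_Icc_one_split _ _ hm1]
          have h11 : ((1:ℕ):ℝ) ^ (-(2*(3/2:ℝ)-2)) = 1 := by
            rw [Nat.cast_one, Real.one_rpow]
          rw [h11]
          have hsum : ∑ j ∈ Icc 2 (n-1), (j:ℝ) ^ (-(2*(3/2:ℝ)-2))
              = ∑ j ∈ Icc 2 (n-1), (j:ℝ)⁻¹ := by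
            refine Finset.sum_congr rfl fun j hj => ?_
            rw [hexp, Real.rpow_neg_one]
          rw [hsum]
          have hh := harm_le_log (n-1) hm1
          have hlogle : Real.log ((n-1:ℕ):ℝ) ≤ Real.log n := by
            apply Real.log_le_log (by exact_mod_cast hm1)
            exact_mod_cast Nat.sub_le n 1
          linarith
      calc ∑ j ∈ Icc 1 (n - 1), (∑ i ∈ Icc (j + 1) n, (i : ℝ) ^ (-(3/2:ℝ))) ^ 2
          ≤ (∑ j ∈ Icc 1 (n-1), (j:ℝ) ^ (-(2*(3/2:ℝ)-2))) / ((3/2:ℝ)-1)^2 := hT n hn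
        _ ≤ (1 + Real.log n) / ((3/2:ℝ)-1)^2 := by gcongr
        _ ≤ (2 * max ((n:ℝ) ^ ((3:ℝ) - 2*(3/2))) (Real.log n)) / ((3/2:ℝ)-1)^2 := by
            gcongr ?_ / _
            linarith
        _ = 1/((3/2-1:ℝ)^2) * 2 * max ((n:ℝ) ^ ((3:ℝ) - 2*(3/2))) (Real.log n) := by ring
    · -- c > 3/2 : d = 2c-2 > 1
      have hd1 : (1:ℝ) < 2*c-2 := by linarith
      have hdd : (0:ℝ) < 2*c-2-1 := by linarith
      set C : ℝ := 1 + 1/(2*c-2-1) with hC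
      have hC0 : 0 < C := by positivity
      have hlog2 : (0:ℝ) < Real.log 2 := Real.log_pos (by norm_num)
      refine ⟨1/((c-1)^2) * C * (1/Real.log 2 + 1), by positivity, fun n hn => ?_⟩
      have hnR : (1:ℝ) ≤ (n:ℝ) := by exact_mod_cast hn
      have hU : ∑ j ∈ Icc 1 (n-1), (j:ℝ) ^ (-(2*c-2)) ≤ C := by
        rcases Nat.eq_or_lt_of_le hn with h | h
        · rw [Finset.Icc_eq_empty (by omega)]
          simp only [Finset.sum_empty]
          linarith
        · have hm1 : 1 ≤ n - 1 := by omega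
          rw [sum_Icc_one_split _ _ hm1]
          have h11 : ((1:ℕ):ℝ) ^ (-(2*c-2)) = 1 := by rw [Nat.cast_one, Real.one_rpow]
          rw [h11]
          have htail := tail_rpow (2*c-2) hd1 1 le_rfl (n-1)
          have h1p : ((1:ℕ):ℝ) ^ (1-(2*c-2)) = 1 := by rw [Nat.cast_one, Real.one_rpow]
          rw [h1p] at htail
          have htail' : ∑ i ∈ Icc 2 (n-1), (i:ℝ) ^ (-(2*c-2)) ≤ 1/(2*c-2-1) := by
            simpa using htail
          rw [hC]; linarith
      have hmaxC : C ≤ (C * (1/Real.log 2 + 1)) * max ((n:ℝ) ^ (3-2*c)) (Real.log n) := by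
        rcases Nat.eq_or_lt_of_le hn with h | h
        · have : (n:ℝ) = 1 := by exact_mod_cast h.symm
          rw [this, Real.one_rpow, Real.log_one]
          have hmax : max (1:ℝ) 0 = 1 := by norm_num
          rw [hmax, mul_one]
          have hpos : (0:ℝ) < 1/Real.log 2 := by positivity
          exact le_mul_of_one_le_right hC0.le (by linarith)
        · have h2n : (2:ℝ) ≤ (n:ℝ) := by exact_mod_cast h
          have hlogn : Real.log 2 ≤ Real.log n := Real.log_le_log (by norm_num) h2n
          have hmax : Real.log 2 ≤ max ((n:ℝ) ^ (3-2*c)) (Real.log n) :=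
            le_trans hlogn (le_max_right _ _)
          have hkey : C = (C * (1/Real.log 2)) * Real.log 2 := by
            field_simp
          calc C = (C * (1/Real.log 2)) * Real.log 2 := hkey
            _ ≤ (C * (1/Real.log 2 + 1)) * max ((n:ℝ) ^ (3-2*c)) (Real.log n) := by
                have h1 : C * (1/Real.log 2) ≤ C * (1/Real.log 2 + 1) := by
                  exact mul_le_mul_of_nonneg_left (by linarith) hC0.le
                have h2 : (0:ℝ) ≤ C * (1/Real.log 2) := by positivity
                exact mul_le_mul h1 hmax hlog2.le (by positivity)
      calc ∑ j ∈ Icc 1 (n - 1), (∑ i ∈ Icc (j + 1) n, (i : ℝ) ^ (-c)) ^ 2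
          ≤ (∑ j ∈ Icc 1 (n-1), (j:ℝ) ^ (-(2*c-2))) / (c-1)^2 := hT n hn
        _ ≤ C / (c-1)^2 := by gcongr
        _ ≤ ((C * (1/Real.log 2 + 1)) * max ((n:ℝ) ^ (3-2*c)) (Real.log n)) / (c-1)^2 := by
            gcongr
        _ = 1/((c-1)^2) * C * (1/Real.log 2 + 1) * max ((n:ℝ) ^ (3-2*c)) (Real.log n) := by
            ring
  · -- case c = 1
    intro hc1
    refine ⟨1, one_pos, fun n hn => ?_⟩
    have hnR : (1:ℝ) ≤ (n:ℝ) := by exact_mod_cast hn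
    have hlog0 : 0 ≤ Real.log n := Real.log_nonneg hnR
    have hbound : ∀ j ∈ Icc 1 (n-1),
        (∑ i ∈ Icc (j + 1) n, (i : ℝ)⁻¹) ^ 2 ≤ Real.log n ^ 2 := by
      intro j hj
      have hj1 : 1 ≤ j := (Finset.mem_Icc.mp hj).1
      have hS0 : (0:ℝ) ≤ ∑ i ∈ Icc (j + 1) n, (i : ℝ)⁻¹ :=
        Finset.sum_nonneg fun i _ => by positivity
      have hSle : ∑ i ∈ Icc (j + 1) n, (i : ℝ)⁻¹ ≤ Real.log n := by
        calc ∑ i ∈ Icc (j + 1) n, (i : ℝ)⁻¹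
            ≤ ∑ i ∈ Icc 2 n, (i : ℝ)⁻¹ := by
              apply Finset.sum_le_sum_of_subset_of_nonneg
              · exact Finset.Icc_subset_Icc (by omega) le_rfl
              · intro i _ _; positivity
          _ ≤ Real.log n := harm_le_log n hn
      exact pow_le_pow_left₀ hS0 hSle 2
    calc ∑ j ∈ Icc 1 (n - 1), (∑ i ∈ Icc (j + 1) n, (i : ℝ)⁻¹) ^ 2
        ≤ (Icc 1 (n-1)).card • (Real.log n ^ 2) := Finset.sum_le_card_nsmul _ _ _ hbound
      _ = ((n-1:ℕ):ℝ) * Real.log n ^ 2 := by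
          rw [Nat.card_Icc, nsmul_eq_mul]
          norm_num
      _ ≤ 1 * (n:ℝ) * Real.log n ^ 2 := by
          rw [one_mul]
          have : ((n-1:ℕ):ℝ) ≤ (n:ℝ) := by exact_mod_cast Nat.sub_le n 1
          nlinarith
  · -- case c < 1
    intro h1
    have h1c : (0:ℝ) < 1 - c := by linarith
    refine ⟨1/(1-c)^2, by positivity, fun n hn => ?_⟩
    have hnR : (1:ℝ) ≤ (n:ℝ) := by exact_mod_cast hn
    have hn0 : (0:ℝ) < (n:ℝ) := by linarith
    have hbound : ∀ j ∈ Icc 1 (n-1),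
        (∑ i ∈ Icc (j + 1) n, (i : ℝ) ^ (-c)) ^ 2 ≤ ((n:ℝ)^(1-c)/(1-c)) ^ 2 := by
      intro j hj
      have hS0 : (0:ℝ) ≤ ∑ i ∈ Icc (j + 1) n, (i : ℝ) ^ (-c) :=
        Finset.sum_nonneg fun i _ => Real.rpow_nonneg (by positivity) _
      have hSle : ∑ i ∈ Icc (j + 1) n, (i : ℝ) ^ (-c) ≤ (n:ℝ)^(1-c)/(1-c) := by
        calc ∑ i ∈ Icc (j + 1) n, (i : ℝ) ^ (-c)
            ≤ ∑ i ∈ Icc 1 n, (i : ℝ) ^ (-c) := by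
              apply Finset.sum_le_sum_of_subset_of_nonneg
              · exact Finset.Icc_subset_Icc (by omega) le_rfl
              · intro i _ _; exact Real.rpow_nonneg (by positivity) _
          _ ≤ (n:ℝ)^(1-c)/(1-c) := sum_rpow_lt_one c hcpos h1 n
      exact pow_le_pow_left₀ hS0 hSle 2
    have hsq : ((n:ℝ)^(1-c)) ^ 2 = (n:ℝ) ^ (2-2*c) := by
      rw [← Real.rpow_natCast ((n:ℝ) ^ (1-c)) 2, ← Real.rpow_mul hn0.le]
      norm_num
      congr 1
      ring
    have hmul : (n:ℝ) * (n:ℝ) ^ (2-2*c) = (n:ℝ) ^ (3-2*c) := by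
      rw [show (3:ℝ)-2*c = 1 + (2-2*c) by ring, Real.rpow_add hn0, Real.rpow_one]
    calc ∑ j ∈ Icc 1 (n - 1), (∑ i ∈ Icc (j + 1) n, (i : ℝ) ^ (-c)) ^ 2
        ≤ (Icc 1 (n-1)).card • (((n:ℝ)^(1-c)/(1-c)) ^ 2) :=
          Finset.sum_le_card_nsmul _ _ _ hbound
      _ = ((n-1:ℕ):ℝ) * (((n:ℝ)^(1-c)/(1-c)) ^ 2) := by
          rw [Nat.card_Icc, nsmul_eq_mul]
          norm_num
      _ ≤ (n:ℝ) * (((n:ℝ)^(1-c)/(1-c)) ^ 2) := by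
          have : ((n-1:ℕ):ℝ) ≤ (n:ℝ) := by exact_mod_cast Nat.sub_le n 1
          have hpos : (0:ℝ) ≤ ((n:ℝ)^(1-c)/(1-c)) ^ 2 := sq_nonneg _
          nlinarith
      _ = 1/(1-c)^2 * ((n:ℝ) * (n:ℝ)^(2-2*c)) := by
          rw [div_pow, hsq]; ring
      _ = 1/(1-c)^2 * (n:ℝ) ^ (3-2*c) := by rw [hmul]
end

section
/- Consider the linear SGD recursion β_i = β_{i-1} + γ(Y_i − X_i^⊤ β_{i-1}) X_i with constant step size γ, and the perturb-one difference η_i = β_i − β'_i, where β'_i is the same recursion run with the j-th sample replaced by an i.i.d. copy. If ‖X_i‖ ≤ R almost surely, |Y_i − X_i^⊤ β_{i-1}| ≤ M almost surely, γ ≤ R^{-1}·R^{-1} (i.e., γ‖X_i‖² ≤ 1), and λ_min(E[X X^⊤]) ≥ λ̲ > 0, then ‖η_j‖ ≤ 2γMR and for all i > j, E[‖η_i‖²/‖η_{i-1}‖² | F^{i-1}] ≤ exp(−γλ̲) on {η_{i-1} ≠ 0}. -/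
open MeasureTheory RealInnerProductSpace

private lemma abs_coord_le {p : ℕ} (x : EuclideanSpace ℝ (Fin p)) (i : Fin p) :
    |x i| ≤ ‖x‖ := by
  rw [EuclideanSpace.norm_eq, ← Real.sqrt_sq_eq_abs]
  apply Real.sqrt_le_sqrt
  have := Finset.single_le_sum (f := fun k => ‖x k‖ ^ 2) (fun k _ => sq_nonneg _)
    (Finset.mem_univ i)
  simpa [Real.norm_eq_abs, sq_abs] using this

private lemma inner_sq_expand {p : ℕ} (x v : EuclideanSpace ℝ (Fin p)) :
    ⟪x, v⟫ ^ 2 = ∑ q : Fin p × Fin p, (v q.1 * v q.2) * (x q.1 * x q.2) := by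
  have h1 : ⟪x, v⟫ = ∑ i, x i * v i := by
    simp [PiLp.inner_apply, RCLike.inner_apply, mul_comm]
  rw [h1, sq, Finset.sum_mul_sum, ← Finset.univ_product_univ, Finset.sum_product]
  exact Finset.sum_congr rfl fun i _ => Finset.sum_congr rfl fun k _ => by ring

private lemma condexp_inner_sq {Ω : Type*} {m0 : MeasurableSpace Ω} (μ : Measure Ω)
    [IsProbabilityMeasure μ] {m : MeasurableSpace Ω} (hm : m ≤ m0) {p : ℕ}
    {X u : Ω → EuclideanSpace ℝ (Fin p)} (hX : Measurable[m0] X)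
    (hu : StronglyMeasurable[m] u) (hubd : ∀ ω, ‖u ω‖ ≤ 1)
    {R : ℝ} (hR : 0 ≤ R) (hXbd : ∀ᵐ ω ∂μ, ‖X ω‖ ≤ R)
    (hindep : ProbabilityTheory.Indep (MeasurableSpace.comap X inferInstance) m μ) :
    μ[fun ω => ⟪X ω, u ω⟫ ^ 2 | m] =ᵐ[μ] fun ω => ∫ ω', ⟪X ω', u ω⟫ ^ 2 ∂μ := by
  have hXcoord : ∀ k : Fin p, Measurable[m0] fun ω => X ω k := fun k =>
    ((EuclideanSpace.proj k : EuclideanSpace ℝ (Fin p) →L[ℝ] ℝ).continuous.measurable).comp hX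
  have hXXbd : ∀ (k l : Fin p), ∀ᵐ ω ∂μ, ‖X ω k * X ω l‖ ≤ R * R := by
    intro k l
    filter_upwards [hXbd] with ω hω
    rw [Real.norm_eq_abs, abs_mul]
    exact mul_le_mul ((abs_coord_le _ k).trans hω) ((abs_coord_le _ l).trans hω)
      (abs_nonneg _) hR
  have hXXint : ∀ (k l : Fin p), Integrable (fun ω => X ω k * X ω l) μ := fun k l =>
    Integrable.mono' (integrable_const (R * R))
      (Measurable.aestronglyMeasurable (μ := μ) ((hXcoord k).mul (hXcoord l))) (hXXbd k l)
  have hucoordbd : ∀ (ω : Ω) (k : Fin p), |u ω k| ≤ 1 := fun ω k =>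
    (abs_coord_le _ k).trans (hubd ω)
  have huu : ∀ q : Fin p × Fin p, StronglyMeasurable[m] fun ω => u ω q.1 * u ω q.2 := by
    intro q
    exact ((EuclideanSpace.proj q.1 : EuclideanSpace ℝ (Fin p) →L[ℝ] ℝ).continuous.comp_stronglyMeasurable hu).mul
      ((EuclideanSpace.proj q.2 : EuclideanSpace ℝ (Fin p) →L[ℝ] ℝ).continuous.comp_stronglyMeasurable hu)
  set f : Fin p × Fin p → Ω → ℝ :=
    fun q ω => (u ω q.1 * u ω q.2) * (X ω q.1 * X ω q.2) with hf
  have hfint : ∀ q : Fin p × Fin p, Integrable (f q) μ := by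
    intro q
    refine Integrable.mono' (integrable_const (R * R))
      (((huu q).mono hm).aestronglyMeasurable.mul
        ((hXcoord q.1).mul (hXcoord q.2)).aestronglyMeasurable) ?_
    filter_upwards [hXXbd q.1 q.2] with ω hω
    rw [Real.norm_eq_abs, abs_mul]
    calc |u ω q.1 * u ω q.2| * |X ω q.1 * X ω q.2| ≤ 1 * (R * R) := by
          apply mul_le_mul _ hω (abs_nonneg _) zero_le_one
          rw [abs_mul]
          exact mul_le_one₀ (hucoordbd ω q.1) (abs_nonneg _) (hucoordbd ω q.2)
      _ = R * R := one_mul _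
  have hXmeas_comap : @Measurable Ω _ (MeasurableSpace.comap X inferInstance) _ X :=
    Measurable.of_comap_le le_rfl
  have hXXm : ∀ q : Fin p × Fin p,
      StronglyMeasurable[MeasurableSpace.comap X inferInstance]
        fun ω => X ω q.1 * X ω q.2 := by
    intro q
    exact (Measurable.stronglyMeasurable
      (((EuclideanSpace.proj q.1 : EuclideanSpace ℝ (Fin p) →L[ℝ] ℝ).continuous.measurable.comp (measurable_id.comp hXmeas_comap)).mul
        ((EuclideanSpace.proj q.2 : EuclideanSpace ℝ (Fin p) →L[ℝ] ℝ).continuous.measurable.comp (measurable_id.comp hXmeas_comap))))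
  -- per-term conditional expectation
  have hterm : ∀ q : Fin p × Fin p, μ[f q | m] =ᵐ[μ]
      fun ω => (u ω q.1 * u ω q.2) * ∫ ω', X ω' q.1 * X ω' q.2 ∂μ := by
    intro q
    have h1 : μ[f q | m] =ᵐ[μ]
        (fun ω => u ω q.1 * u ω q.2) * μ[fun ω => X ω q.1 * X ω q.2 | m] :=
      condExp_mul_of_stronglyMeasurable_left (huu q) (hfint q) (hXXint q.1 q.2)
    have h2 : μ[(fun ω => X ω q.1 * X ω q.2) | m] =ᵐ[μ]
        fun _ => ∫ ω', X ω' q.1 * X ω' q.2 ∂μ :=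
      condExp_indep_eq (measurable_iff_comap_le.mp hX) hm (hXXm q) hindep
    refine h1.trans ?_
    filter_upwards [h2] with ω hω
    simp only [Pi.mul_apply, hω]
  have hsum : μ[fun ω => ⟪X ω, u ω⟫ ^ 2 | m] =ᵐ[μ] ∑ q : Fin p × Fin p, μ[f q | m] := by
    have : (fun ω => ⟪X ω, u ω⟫ ^ 2) = ∑ q : Fin p × Fin p, f q := by
      funext ω
      rw [inner_sq_expand]
      simp [hf]
    rw [this]
    exact condExp_finsetSum (fun q _ => hfint q) _
  have hall : ∀ᵐ ω ∂μ, ∀ q : Fin p × Fin p,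
      (μ[f q | m]) ω = (u ω q.1 * u ω q.2) * ∫ ω', X ω' q.1 * X ω' q.2 ∂μ :=
    ae_all_iff.mpr hterm
  refine hsum.trans ?_
  filter_upwards [hall] with ω hω
  rw [Finset.sum_apply]
  have hint : ∫ ω', ⟪X ω', u ω⟫ ^ 2 ∂μ
      = ∑ q : Fin p × Fin p, (u ω q.1 * u ω q.2) * ∫ ω', X ω' q.1 * X ω' q.2 ∂μ := by
    have hrw : (fun ω' => ⟪X ω', u ω⟫ ^ 2)
        = fun ω' => ∑ q : Fin p × Fin p, (u ω q.1 * u ω q.2) * (X ω' q.1 * X ω' q.2) := by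
      funext ω'; rw [inner_sq_expand]
    rw [hrw, integral_finset_sum _ fun q _ => (hXXint q.1 q.2).const_mul _]
    exact Finset.sum_congr rfl fun q _ => integral_const_mul _ _
  rw [hint]
  exact Finset.sum_congr rfl fun q _ => hω q

set_option maxHeartbeats 1000000 in

/-- Key intermediate facts in the stability analysis of constant-step linear SGD
(Theorem 2): with `β_i = β_{i−1} + γ(Y_i − X_i^⊤β_{i−1})X_i` and `β'_i` the same
recursion with the `j`-th sample replaced by an i.i.d. copy `(X', Y')`, setting
`η_i = β_i − β'_i`, if `‖X_i‖ ≤ R`, the residuals are bounded by `M`, `γ‖X_i‖² ≤ 1`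
and `λ_min(E[X X^⊤]) ≥ λ̲ > 0`, then `‖η_j‖ ≤ 2γMR` a.s. and for `i > j`,
`E[‖η_i‖²/‖η_{i−1}‖² | F^{i−1}] ≤ exp(−γλ̲)` a.s. on `{η_{i−1} ≠ 0}`. -/
theorem stmt_19 {Ω : Type*} {m0 : MeasurableSpace Ω} (μ : Measure Ω)
    [IsProbabilityMeasure μ] (ℱ : Filtration ℕ m0) {p : ℕ}
    (X : ℕ → Ω → EuclideanSpace ℝ (Fin p)) (Y : ℕ → Ω → ℝ)
    (X' : Ω → EuclideanSpace ℝ (Fin p)) (Y' : Ω → ℝ)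
    (β β' : ℕ → Ω → EuclideanSpace ℝ (Fin p))
    (γ R M lam : ℝ) (j : ℕ) (hj : 1 ≤ j)
    (hγ : 0 < γ) (hR : 0 < R) (hM : 0 < M) (hlam : 0 < lam)
    (hγR : γ * R ^ 2 ≤ 1)
    -- the SGD recursions
    (hβ0 : β 0 = 0) (hβ'0 : β' 0 = 0)
    (hβrec : ∀ i : ℕ, β (i + 1) = fun ω =>
      β i ω + (γ * (Y (i + 1) ω - ⟪X (i + 1) ω, β i ω⟫)) • X (i + 1) ω)
    (hβ'rec : ∀ i : ℕ, i + 1 ≠ j → β' (i + 1) = fun ω =>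
      β' i ω + (γ * (Y (i + 1) ω - ⟪X (i + 1) ω, β' i ω⟫)) • X (i + 1) ω)
    (hβ'j : β' j = fun ω =>
      β' (j - 1) ω + (γ * (Y' ω - ⟪X' ω, β' (j - 1) ω⟫)) • X' ω)
    -- almost sure boundedness
    (hXbd : ∀ i, ∀ᵐ ω ∂μ, ‖X i ω‖ ≤ R) (hX'bd : ∀ᵐ ω ∂μ, ‖X' ω‖ ≤ R)
    (hres : ∀ i, 1 ≤ i → ∀ᵐ ω ∂μ,
      |Y i ω - ⟪X i ω, β (i - 1) ω⟫| ≤ M ∧ |Y i ω - ⟪X i ω, β' (i - 1) ω⟫| ≤ M)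
    (hres' : ∀ᵐ ω ∂μ, |Y' ω - ⟪X' ω, β' (j - 1) ω⟫| ≤ M)
    -- adaptedness and independence of the fresh sample from the past
    (hβad : ∀ i, StronglyMeasurable[ℱ i] (β i))
    (hβ'ad : ∀ i, StronglyMeasurable[ℱ i] (β' i))
    (hXad : ∀ i, StronglyMeasurable[ℱ i] (X i))
    (hindep : ∀ i, 1 ≤ i →
      ProbabilityTheory.Indep (MeasurableSpace.comap (X i) inferInstance)
        (ℱ (i - 1)) μ)
    -- lower bound on the smallest eigenvalue of E[X Xᵀ]
    (heig : ∀ i, 1 ≤ i → ∀ v : EuclideanSpace ℝ (Fin p),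
      lam * ‖v‖ ^ 2 ≤ ∫ ω, ⟪X i ω, v⟫ ^ 2 ∂μ) :
    (∀ᵐ ω ∂μ, ‖β j ω - β' j ω‖ ≤ 2 * γ * M * R) ∧
      ∀ i : ℕ, j < i → ∀ᵐ ω ∂μ,
        β (i - 1) ω - β' (i - 1) ω ≠ 0 →
        (μ[fun ω' => ‖β i ω' - β' i ω'‖ ^ 2 / ‖β (i - 1) ω' - β' (i - 1) ω'‖ ^ 2 |
            ℱ (i - 1)]) ω ≤ Real.exp (-(γ * lam)) := by
  constructor
  · -- Part 1
    have hagree : ∀ i, i < j → β' i = β i := by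
      intro i hi
      induction i with
      | zero => rw [hβ0, hβ'0]
      | succ n ih =>
        rw [hβ'rec n (Nat.ne_of_lt hi), hβrec n, ih (Nat.lt_of_succ_lt hi)]
    have hprev : β' (j - 1) = β (j - 1) := hagree _ (Nat.sub_lt hj one_pos)
    have hβj : β j = fun ω =>
        β (j - 1) ω + (γ * (Y j ω - ⟪X j ω, β (j - 1) ω⟫)) • X j ω := by
      have h := hβrec (j - 1)
      rwa [Nat.sub_add_cancel hj] at h
    filter_upwards [hres j hj, hres', hXbd j, hX'bd] with ω h1 h2 h3 h4
    have hdiff : β j ω - β' j ω = (γ * (Y j ω - ⟪X j ω, β (j - 1) ω⟫)) • X j ω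
        - (γ * (Y' ω - ⟪X' ω, β' (j - 1) ω⟫)) • X' ω := by
      simp only [hβj, hβ'j]
      rw [hprev]
      abel
    rw [hdiff]
    have hb1 : ‖(γ * (Y j ω - ⟪X j ω, β (j - 1) ω⟫)) • X j ω‖ ≤ γ * M * R := by
      rw [norm_smul, Real.norm_eq_abs, abs_mul, abs_of_pos hγ]
      have := h1.1
      gcongr
    have hb2 : ‖(γ * (Y' ω - ⟪X' ω, β' (j - 1) ω⟫)) • X' ω‖ ≤ γ * M * R := by
      rw [norm_smul, Real.norm_eq_abs, abs_mul, abs_of_pos hγ]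
      gcongr
    calc ‖(γ * (Y j ω - ⟪X j ω, β (j - 1) ω⟫)) • X j ω
          - (γ * (Y' ω - ⟪X' ω, β' (j - 1) ω⟫)) • X' ω‖
        ≤ ‖(γ * (Y j ω - ⟪X j ω, β (j - 1) ω⟫)) • X j ω‖
          + ‖(γ * (Y' ω - ⟪X' ω, β' (j - 1) ω⟫)) • X' ω‖ := norm_sub_le _ _
      _ ≤ γ * M * R + γ * M * R := add_le_add hb1 hb2
      _ = 2 * γ * M * R := by ring
  · -- Part 2
    intro i hi
    obtain ⟨k, rfl⟩ : ∃ k, i = k + 1 := ⟨i - 1, by omega⟩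
    simp only [Nat.add_sub_cancel]
    -- recursion for the difference
    have hrec : ∀ ω, β (k + 1) ω - β' (k + 1) ω
        = (β k ω - β' k ω) - (γ * ⟪X (k + 1) ω, β k ω - β' k ω⟫) • X (k + 1) ω := by
      intro ω
      have h1 := congrFun (hβrec k) ω
      have h2 := congrFun (hβ'rec k (by omega)) ω
      rw [h1, h2, inner_sub_right]
      module
    set u : Ω → EuclideanSpace ℝ (Fin p) :=
      fun ω => ‖β k ω - β' k ω‖⁻¹ • (β k ω - β' k ω) with hudef
    have hubd : ∀ ω, ‖u ω‖ ≤ 1 := by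
      intro ω
      by_cases h : β k ω - β' k ω = 0
      · simp [hudef, h]
      · rw [hudef]
        simp only [norm_smul, norm_inv, norm_norm]
        rw [inv_mul_cancel₀ (norm_ne_zero_iff.mpr h)]
    have hunorm : ∀ ω, β k ω - β' k ω ≠ 0 → ‖u ω‖ = 1 := by
      intro ω h
      rw [hudef]
      simp only [norm_smul, norm_inv, norm_norm]
      exact inv_mul_cancel₀ (norm_ne_zero_iff.mpr h)
    -- measurability
    have hηpm : StronglyMeasurable[ℱ k] fun ω => β k ω - β' k ω := (hβad k).sub (hβ'ad k)
    have hum : StronglyMeasurable[ℱ k] u :=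
      (hηpm.norm.measurable.inv.stronglyMeasurable).smul hηpm
    have hXm : Measurable[m0] (X (k + 1)) := ((hXad (k + 1)).mono (ℱ.le _)).measurable
    have hηm : Measurable[m0] fun ω => β (k + 1) ω - β' (k + 1) ω :=
      (((hβad (k + 1)).sub (hβ'ad (k + 1))).mono (ℱ.le _)).measurable
    have hηpm0 : Measurable[m0] fun ω => β k ω - β' k ω := (hηpm.mono (ℱ.le _)).measurable
    have hum0 : Measurable[m0] u := (hum.mono (ℱ.le _)).measurable
    set φ : Ω → ℝ :=
      fun ω' => ‖β (k + 1) ω' - β' (k + 1) ω'‖ ^ 2 / ‖β k ω' - β' k ω'‖ ^ 2 with hφdef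
    set q : Ω → ℝ := fun ω => ⟪X (k + 1) ω, u ω⟫ ^ 2 with hqdef
    set ψ : Ω → ℝ := fun ω => 1 - γ * q ω with hψdef
    -- pointwise bounds
    have hptw : ∀ᵐ ω ∂μ, (0 ≤ φ ω ∧ φ ω ≤ ψ ω) ∧ (0 ≤ q ω ∧ q ω ≤ R ^ 2) := by
      filter_upwards [hXbd (k + 1)] with ω hXω
      have hq0 : 0 ≤ q ω := sq_nonneg _
      have hqR : q ω ≤ R ^ 2 := by
        rw [hqdef]
        have h1 : |⟪X (k + 1) ω, u ω⟫| ≤ R := by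
          calc |⟪X (k + 1) ω, u ω⟫| ≤ ‖X (k + 1) ω‖ * ‖u ω‖ := abs_real_inner_le_norm _ _
            _ ≤ R * 1 := mul_le_mul hXω (hubd ω) (norm_nonneg _) hR.le
            _ = R := mul_one R
        calc ⟪X (k + 1) ω, u ω⟫ ^ 2 = |⟪X (k + 1) ω, u ω⟫| ^ 2 := (sq_abs _).symm
          _ ≤ R ^ 2 := by gcongr
      refine ⟨⟨div_nonneg (sq_nonneg _) (sq_nonneg _), ?_⟩, hq0, hqR⟩
      by_cases hz : β k ω - β' k ω = 0
      · have hη0 : β (k + 1) ω - β' (k + 1) ω = 0 := by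
          rw [hrec ω, hz]; simp
        have hu0 : u ω = 0 := by simp [hudef, hz]
        simp [hφdef, hψdef, hqdef, hη0, hz, hu0]
      · have hnpos : (0 : ℝ) < ‖β k ω - β' k ω‖ := norm_pos_iff.mpr hz
        have h3 : ⟪β k ω - β' k ω, X (k + 1) ω⟫ = ⟪X (k + 1) ω, β k ω - β' k ω⟫ :=
          real_inner_comm _ _
        have hexp : ‖β (k + 1) ω - β' (k + 1) ω‖ ^ 2
            = ‖β k ω - β' k ω‖ ^ 2 - 2 * γ * ⟪X (k + 1) ω, β k ω - β' k ω⟫ ^ 2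
              + γ ^ 2 * ⟪X (k + 1) ω, β k ω - β' k ω⟫ ^ 2 * ‖X (k + 1) ω‖ ^ 2 := by
          rw [hrec ω, norm_sub_sq_real, real_inner_smul_right, h3, norm_smul, mul_pow,
            Real.norm_eq_abs, sq_abs]
          ring
        have hγX : γ * ‖X (k + 1) ω‖ ^ 2 ≤ 1 := by
          have : ‖X (k + 1) ω‖ ^ 2 ≤ R ^ 2 := by gcongr
          nlinarith
        have hkey : ‖β (k + 1) ω - β' (k + 1) ω‖ ^ 2
            ≤ ‖β k ω - β' k ω‖ ^ 2 - γ * ⟪X (k + 1) ω, β k ω - β' k ω⟫ ^ 2 := by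
          rw [hexp]
          nlinarith [mul_le_mul_of_nonneg_left hγX
            (mul_nonneg hγ.le (sq_nonneg (⟪X (k + 1) ω, β k ω - β' k ω⟫ : ℝ)))]
        have hinner_u : (⟪X (k + 1) ω, u ω⟫ : ℝ)
            = ‖β k ω - β' k ω‖⁻¹ * ⟪X (k + 1) ω, β k ω - β' k ω⟫ := by
          rw [hudef]
          exact real_inner_smul_right _ _ _
        show φ ω ≤ ψ ω
        simp only [hφdef, hψdef, hqdef, hinner_u]
        rw [div_le_iff₀ (by positivity)]
        have heq : (1 - γ * (‖β k ω - β' k ω‖⁻¹ * ⟪X (k + 1) ω, β k ω - β' k ω⟫) ^ 2)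
              * ‖β k ω - β' k ω‖ ^ 2
            = ‖β k ω - β' k ω‖ ^ 2 - γ * ⟪X (k + 1) ω, β k ω - β' k ω⟫ ^ 2 := by
          field_simp
        rw [heq]
        exact hkey
    -- integrability
    have hφint : Integrable φ μ := by
      refine Integrable.mono' (integrable_const 1)
        (Measurable.aestronglyMeasurable (μ := μ)
          ((hηm.norm.pow_const 2).div (hηpm0.norm.pow_const 2))) ?_
      filter_upwards [hptw] with ω hω
      rw [Real.norm_eq_abs, abs_of_nonneg hω.1.1]
      calc φ ω ≤ ψ ω := hω.1.2
        _ ≤ 1 := by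
          have h := hω.2.1
          simp only [hψdef]
          nlinarith
    have hqm : Measurable[m0] q := by
      apply Measurable.pow_const
      exact Measurable.inner (𝕜 := ℝ) hXm hum0
    have hqint : Integrable q μ := by
      refine Integrable.mono' (integrable_const (R ^ 2))
        (Measurable.aestronglyMeasurable (μ := μ) hqm) ?_
      filter_upwards [hptw] with ω hω
      rw [Real.norm_eq_abs, abs_of_nonneg hω.2.1]
      exact hω.2.2
    have hψint : Integrable ψ μ := by
      have : ψ = (fun _ => (1 : ℝ)) - γ • q := by
        funext ω
        simp [hψdef]
      rw [this]
      exact (integrable_const 1).sub (hqint.smul γ)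
    -- conditional expectation comparison
    have hmono : μ[φ | ℱ k] ≤ᵐ[μ] μ[ψ | ℱ k] := by
      refine condExp_mono hφint hψint ?_
      filter_upwards [hptw] with ω hω
      exact hω.1.2
    -- conditional expectation of ψ
    have hce_q : μ[q | ℱ k] =ᵐ[μ] fun ω => ∫ ω', ⟪X (k + 1) ω', u ω⟫ ^ 2 ∂μ := by
      have hind := hindep (k + 1) (by omega)
      rw [Nat.add_sub_cancel] at hind
      exact condexp_inner_sq μ (ℱ.le k) hXm hum hubd hR.le (hXbd (k + 1)) hind
    have hce_ψ : μ[ψ | ℱ k] =ᵐ[μ]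
        fun ω => 1 - γ * ∫ ω', ⟪X (k + 1) ω', u ω⟫ ^ 2 ∂μ := by
      have h0 : ψ = (fun _ => (1 : ℝ)) - γ • q := by
        funext ω
        simp [hψdef]
      rw [h0]
      refine (condExp_sub (integrable_const 1) (hqint.smul γ) _).trans ?_
      have h1 : μ[(fun _ => (1 : ℝ)) | ℱ k] = fun _ => (1 : ℝ) :=
        condExp_const (ℱ.le k) (1 : ℝ)
      have h2 : μ[γ • q | ℱ k] =ᵐ[μ] γ • μ[q | ℱ k] := condExp_smul γ q _
      filter_upwards [h2, hce_q] with ω hω2 hω3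
      simp only [Pi.sub_apply, h1, hω2, Pi.smul_apply, hω3, smul_eq_mul]
    -- conclusion
    filter_upwards [hmono, hce_ψ] with ω hω1 hω2 hz
    have hint_ge : lam ≤ ∫ ω', ⟪X (k + 1) ω', u ω⟫ ^ 2 ∂μ := by
      have := heig (k + 1) (by omega) (u ω)
      rwa [hunorm ω hz, one_pow, mul_one] at this
    have hexple : 1 - γ * lam ≤ Real.exp (-(γ * lam)) := by
      have := Real.add_one_le_exp (-(γ * lam))
      linarith
    calc (μ[φ | ℱ k]) ω ≤ (μ[ψ | ℱ k]) ω := hω1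
      _ = 1 - γ * ∫ ω', ⟪X (k + 1) ω', u ω⟫ ^ 2 ∂μ := hω2
      _ ≤ 1 - γ * lam := by nlinarith
      _ ≤ Real.exp (-(γ * lam)) := hexple
end
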